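/- arXiv:1012.1691 — 6 statements merged into one kernel-verified Lean document; each statement's English description precedes it below -/
import Mathlib

section
/- Let u ∈ X and suppose there exist L > 0 and p ∈ Q with D p = u and ‖p‖² + ‖D p‖² ≤ L²·‖u‖². Then the element q := (1/E)·Π p satisfies ⟨u, D q⟩ ≥ ‖u‖² and ‖q‖² + ‖D q‖² ≤ F²·‖u‖², where F = (1/E)·√(B²·L² + D₀²). (Abstract form of Proposition 1, 'Divergence lifting of scalar fields': the constant F depends only on the constants of Hypothesis 1 and on the lifting constant L.) -/
open scoped RealInnerProductSpace

/-- Abstract form of Proposition 1 ("Divergence lifting of scalar fields"). -/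
theorem stmt0
    {X Y : Type*} [NormedAddCommGroup X] [InnerProductSpace ℝ X]
    [NormedAddCommGroup Y] [InnerProductSpace ℝ Y]
    (D : Y →ₗ[ℝ] X) (Q : Submodule ℝ Y) (Pi : ↥Q →ₗ[ℝ] Y)
    (A B D₀ E : ℝ) (hA : 0 < A) (hB : 0 < B) (hD₀ : 0 < D₀) (hE : 0 < E)
    (h1 : ∀ p : Q, A * ‖(p : Y)‖ ^ 2 ≤ ⟪(p : Y), Pi p⟫)
    (h2 : ∀ p : Q, ‖Pi p‖ ≤ B * ‖(p : Y)‖)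
    (h3 : ∀ p : Q, ‖D (Pi p)‖ ≤ D₀ * ‖D (p : Y)‖)
    (h4 : ∀ p : Q, ⟪D (p : Y), D (Pi p)⟫ ≥ E * ‖D (p : Y)‖ ^ 2)
    (u : X) (L : ℝ) (hL : 0 < L) (p : Q) (hDp : D (p : Y) = u)
    (hLp : ‖(p : Y)‖ ^ 2 + ‖D (p : Y)‖ ^ 2 ≤ L ^ 2 * ‖u‖ ^ 2)
    (F : ℝ) (hF : F = (1 / E) * Real.sqrt (B ^ 2 * L ^ 2 + D₀ ^ 2)) :
    ⟪u, D ((1 / E) • Pi p)⟫ ≥ ‖u‖ ^ 2 ∧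
      ‖(1 / E) • Pi p‖ ^ 2 + ‖D ((1 / E) • Pi p)‖ ^ 2 ≤ F ^ 2 * ‖u‖ ^ 2 := by
  have hDs : D ((1 / E) • Pi p) = (1 / E) • D (Pi p) := map_smul D _ _
  have hE' : (0:ℝ) < 1 / E := by positivity
  constructor
  · rw [hDs, real_inner_smul_right]
    have := h4 p
    rw [hDp] at this
    calc ‖u‖ ^ 2 = (1/E) * (E * ‖u‖ ^ 2) := by field_simp
      _ ≤ (1/E) * ⟪u, D (Pi p)⟫ := by
          apply mul_le_mul_of_nonneg_left _ hE'.le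
          simpa [hDp] using h4 p
  · rw [hDs, norm_smul, norm_smul]
    have hp2 : ‖(p : Y)‖ ^ 2 ≤ L ^ 2 * ‖u‖ ^ 2 := by
      nlinarith [sq_nonneg ‖D (p:Y)‖]
    have h2' : ‖Pi p‖ ^ 2 ≤ B ^ 2 * ‖(p : Y)‖ ^ 2 := by
      nlinarith [h2 p, norm_nonneg (Pi p), norm_nonneg (p:Y)]
    have h3' : ‖D (Pi p)‖ ^ 2 ≤ D₀ ^ 2 * ‖u‖ ^ 2 := by
      have := h3 p
      rw [hDp] at this
      nlinarith [norm_nonneg (D (Pi p)), norm_nonneg u]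
    have hF2 : F ^ 2 = (1/E)^2 * (B ^ 2 * L ^ 2 + D₀ ^ 2) := by
      rw [hF, mul_pow, Real.sq_sqrt (by positivity)]
    rw [hF2]
    have hn : ‖(1/E : ℝ)‖ = 1/E := by
      rw [Real.norm_eq_abs, abs_of_pos hE']
    rw [hn]
    have key : ‖Pi p‖ ^ 2 + ‖D (Pi p)‖ ^ 2 ≤ (B ^ 2 * L ^ 2 + D₀ ^ 2) * ‖u‖ ^ 2 := by
      nlinarith [mul_le_mul_of_nonneg_left hp2 (sq_nonneg B)]
    calc (1/E * ‖Pi p‖) ^ 2 + (1/E * ‖D (Pi p)‖) ^ 2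
        = (1/E)^2 * (‖Pi p‖ ^ 2 + ‖D (Pi p)‖ ^ 2) := by ring
      _ ≤ (1/E)^2 * ((B ^ 2 * L ^ 2 + D₀ ^ 2) * ‖u‖ ^ 2) :=
          mul_le_mul_of_nonneg_left key (sq_nonneg _)
      _ = (1/E)^2 * (B ^ 2 * L ^ 2 + D₀ ^ 2) * ‖u‖ ^ 2 := by ring
end

section
/- Let X_T ⊆ X be a subspace with D(Q) ⊆ X_T, and let F > 0 be such that for every u ∈ X_T there exists q in the range of Π with ‖q‖² + ‖D q‖² ≤ F²·‖u‖² and ⟨u, D q⟩ ≥ ‖u‖². Let β > 0 satisfy 1 − ((B + 2·D₀)/A)·β − β² ≥ 0 and √(1 − ((B + 2·D₀)/A)·β − β²) ≥ (1 + F·(1 + √((B + 2·D₀)/A)))·√β. Then for every u ∈ X_T and p ∈ Q with ‖u‖² + ‖p‖² + ‖D p‖² = 1, there exist v ∈ X_T and q in the range of Π such that ‖v‖² + ‖q‖² + ‖D q‖² ≤ 1 and ⟨p, q⟩ + ⟨u, D q⟩ + ⟨D p, v⟩ ≥ β. (Abstract form of Proposition 2, 'Discrete stability': the discrete inf-sup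 condition for the Petrov–Galerkin mixed bilinear form γ((u,p),(v,q)) = (p,q) + (u, div q) + (div p, v).) -/
open scoped RealInnerProductSpace
set_option maxHeartbeats 2000000 in

/-- Abstract form of Proposition 2 ("Discrete stability"): the discrete inf-sup
condition for the Petrov–Galerkin mixed bilinear form
`γ((u,p),(v,q)) = (p,q) + (u, div q) + (div p, v)`. -/
theorem stmt1
    {X Y : Type*} [NormedAddCommGroup X] [InnerProductSpace ℝ X]
    [NormedAddCommGroup Y] [InnerProductSpace ℝ Y]
    (D : Y →ₗ[ℝ] X) (Q : Submodule ℝ Y) (Pi : ↥Q →ₗ[ℝ] Y)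
    (A B D₀ E : ℝ) (hA : 0 < A) (hB : 0 < B) (hD₀ : 0 < D₀) (hE : 0 < E)
    (h1 : ∀ p : Q, A * ‖(p : Y)‖ ^ 2 ≤ ⟪(p : Y), Pi p⟫)
    (h2 : ∀ p : Q, ‖Pi p‖ ≤ B * ‖(p : Y)‖)
    (h3 : ∀ p : Q, ‖D (Pi p)‖ ≤ D₀ * ‖D (p : Y)‖)
    (h4 : ∀ p : Q, ⟪D (p : Y), D (Pi p)⟫ ≥ E * ‖D (p : Y)‖ ^ 2)
    (XT : Submodule ℝ X) (hDQ : ∀ p : Q, D (p : Y) ∈ XT)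
    (F : ℝ) (hF : 0 < F)
    (hlift : ∀ u ∈ XT, ∃ q ∈ LinearMap.range Pi,
      ‖q‖ ^ 2 + ‖D q‖ ^ 2 ≤ F ^ 2 * ‖u‖ ^ 2 ∧ ⟪u, D q⟫ ≥ ‖u‖ ^ 2)
    (β : ℝ) (hβ : 0 < β)
    (hβ1 : 1 - ((B + 2 * D₀) / A) * β - β ^ 2 ≥ 0)
    (hβ2 : Real.sqrt (1 - ((B + 2 * D₀) / A) * β - β ^ 2) ≥
      (1 + F * (1 + Real.sqrt ((B + 2 * D₀) / A))) * Real.sqrt β)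
    (u : X) (hu : u ∈ XT) (p : Q)
    (hnorm : ‖u‖ ^ 2 + ‖(p : Y)‖ ^ 2 + ‖D (p : Y)‖ ^ 2 = 1) :
    ∃ v ∈ XT, ∃ q ∈ LinearMap.range Pi,
      ‖v‖ ^ 2 + ‖q‖ ^ 2 + ‖D q‖ ^ 2 ≤ 1 ∧
      ⟪(p : Y), q⟫ + ⟪u, D q⟫ + ⟪D (p : Y), v⟫ ≥ β := by
  have hC : 0 < (B + 2 * D₀) / A := by positivity
  have ha0 : (0:ℝ) ≤ ‖u‖ := norm_nonneg u
  have hb0 : (0:ℝ) ≤ ‖(p : Y)‖ := norm_nonneg _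
  have hc0 : (0:ℝ) ≤ ‖D (p : Y)‖ := norm_nonneg _
  have ha1 : ‖u‖ ≤ 1 := by nlinarith [sq_nonneg ‖(p : Y)‖, sq_nonneg ‖D (p : Y)‖]
  have hb1 : ‖(p : Y)‖ ≤ 1 := by nlinarith [sq_nonneg ‖u‖, sq_nonneg ‖D (p : Y)‖]
  have hβle1 : β ≤ 1 := by nlinarith [mul_pos hC hβ]
  by_cases hcase1 : β ≤ ‖D (p : Y)‖
  · -- Case 1: take v = c⁻¹ • D p, q = 0
    have hcpos : 0 < ‖D (p : Y)‖ := lt_of_lt_of_le hβ hcase1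
    refine ⟨‖D (p : Y)‖⁻¹ • D (p : Y), Submodule.smul_mem _ _ (hDQ p), 0, zero_mem _, ?_, ?_⟩
    · simp only [norm_smul, Real.norm_eq_abs, abs_of_pos (inv_pos.mpr hcpos),
        norm_zero, map_zero]
      rw [inv_mul_cancel₀ (ne_of_gt hcpos)]
      norm_num
    · simp only [inner_zero_right, map_zero, real_inner_smul_right,
        real_inner_self_eq_norm_sq]
      have : ‖D (p : Y)‖⁻¹ * ‖D (p : Y)‖ ^ 2 = ‖D (p : Y)‖ := by
        field_simp
      rw [this]
      linarith
  · push_neg at hcase1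
    obtain ⟨qu, hquR, hqu1, hqu2⟩ := hlift u hu
    by_cases hcase2 : F * (β + ‖(p : Y)‖) ≤ ‖u‖
    · -- Case 2: take v = 0, q = (F * ‖u‖)⁻¹ • qu
      have hapos : 0 < ‖u‖ :=
        lt_of_lt_of_le (by nlinarith : (0:ℝ) < F * (β + ‖(p : Y)‖)) hcase2
      have hFa : 0 < F * ‖u‖ := mul_pos hF hapos
      have hqunorm : ‖qu‖ ≤ F * ‖u‖ := by
        nlinarith [sq_nonneg ‖D qu‖, norm_nonneg qu, sq_nonneg (‖qu‖ - F * ‖u‖)]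
      refine ⟨0, zero_mem _, (F * ‖u‖)⁻¹ • qu,
        Submodule.smul_mem _ _ hquR, ?_, ?_⟩
      · simp only [norm_zero, map_smul, norm_smul, Real.norm_eq_abs,
          abs_of_pos (inv_pos.mpr hFa)]
        have h : ((F * ‖u‖)⁻¹) ^ 2 * (‖qu‖ ^ 2 + ‖D qu‖ ^ 2) ≤
            ((F * ‖u‖)⁻¹) ^ 2 * (F ^ 2 * ‖u‖ ^ 2) := by
          apply mul_le_mul_of_nonneg_left _ (by positivity)
          exact hqu1
        have h2' : ((F * ‖u‖)⁻¹) ^ 2 * (F ^ 2 * ‖u‖ ^ 2) = 1 := by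
          field_simp
        nlinarith [h, h2']
      · simp only [map_smul, real_inner_smul_right, inner_zero_right]
        have hpqu : -(‖(p : Y)‖ * ‖qu‖) ≤ ⟪(p : Y), qu⟫ := by
          have := abs_real_inner_le_norm (p : Y) qu
          cases' abs_le.mp this with h _
          linarith
        have key : β * (F * ‖u‖) ≤ ⟪(p : Y), qu⟫ + ⟪u, D qu⟫ := by
          have h1' : ⟪(p : Y), qu⟫ ≥ -(‖(p : Y)‖ * (F * ‖u‖)) := by
            nlinarith [mul_le_mul_of_nonneg_left hqunorm hb0]
          have h2' : ⟪u, D qu⟫ ≥ ‖u‖ ^ 2 := hqu2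
          nlinarith [mul_le_mul_of_nonneg_right hcase2 hapos.le]
        have ht : (F * ‖u‖)⁻¹ * (β * (F * ‖u‖)) = β := by field_simp
        calc β = (F * ‖u‖)⁻¹ * (β * (F * ‖u‖)) := ht.symm
          _ ≤ (F * ‖u‖)⁻¹ * (⟪(p : Y), qu⟫ + ⟪u, D qu⟫) :=
            mul_le_mul_of_nonneg_left key (by positivity)
          _ = (F * ‖u‖)⁻¹ * ⟪(p : Y), qu⟫ + (F * ‖u‖)⁻¹ * ⟪u, D qu⟫ + 0 := by ring
          _ ≤ _ := by norm_num
    · -- Case 3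
      push_neg at hcase2
      -- first show C β ≤ b ^ 2
      have hb2 : ((B + 2 * D₀) / A) * β ≤ ‖(p : Y)‖ ^ 2 := by
        by_contra hcon
        push_neg at hcon
        set g := Real.sqrt ((B + 2 * D₀) / A) with hgdef
        set sb := Real.sqrt β with hsbdef
        have hg0 : 0 ≤ g := Real.sqrt_nonneg _
        have hsb0 : 0 ≤ sb := Real.sqrt_nonneg _
        have hg2 : g * g = (B + 2 * D₀) / A := Real.mul_self_sqrt hC.le
        have hsb2 : sb * sb = β := Real.mul_self_sqrt hβ.le
        have hsb1 : sb ≤ 1 := by nlinarith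
        have hβsb : β ≤ sb := by nlinarith
        have hstar : (1 + F * (1 + g)) ^ 2 * β + ((B + 2 * D₀) / A) * β + β ^ 2 ≤ 1 := by
          have hmul := mul_self_le_mul_self (by positivity) hβ2
          rw [Real.mul_self_sqrt hβ1] at hmul
          have hKs : ((1 + F * (1 + g)) * sb) * ((1 + F * (1 + g)) * sb)
              = (1 + F * (1 + g)) ^ 2 * β := by
            rw [show ((1 + F * (1 + g)) * sb) * ((1 + F * (1 + g)) * sb)
              = (1 + F * (1 + g)) ^ 2 * (sb * sb) by ring, hsb2]
          linarith [hmul, hKs]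
        have hblt : ‖(p : Y)‖ < g * sb := by
          by_contra hge
          push_neg at hge
          have h' := mul_self_le_mul_self (mul_nonneg hg0 hsb0) hge
          have hgs : (g * sb) * (g * sb) = ((B + 2 * D₀) / A) * β := by
            rw [show (g * sb) * (g * sb) = (g * g) * (sb * sb) by ring, hg2, hsb2]
          linarith [h', hgs]
        have halt : ‖u‖ < F * (1 + g) * sb := by
          have : F * (β + ‖(p : Y)‖) < F * ((1 + g) * sb) := by
            apply mul_lt_mul_of_pos_left _ hF
            nlinarith
          calc ‖u‖ < F * (β + ‖(p : Y)‖) := hcase2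
            _ < F * ((1 + g) * sb) := this
            _ = F * (1 + g) * sb := by ring
        have ha2 : ‖u‖ ^ 2 < F ^ 2 * (1 + g) ^ 2 * β := by
          have h' := mul_self_lt_mul_self ha0 halt
          have hx : (F * (1 + g) * sb) * (F * (1 + g) * sb) = F ^ 2 * (1 + g) ^ 2 * β := by
            rw [show (F * (1 + g) * sb) * (F * (1 + g) * sb)
              = F ^ 2 * (1 + g) ^ 2 * (sb * sb) by ring, hsb2]
          rw [hx] at h'
          linarith [h']
        have hc2 : ‖D (p : Y)‖ ^ 2 < β ^ 2 := by
          have h' := mul_self_lt_mul_self hc0 hcase1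
          linarith [h']
        have hFg : 0 ≤ F * (1 + g) * β :=
          mul_nonneg (mul_nonneg hF.le (by linarith : (0:ℝ) ≤ 1 + g)) hβ.le
        linarith [hstar, ha2, hc2, hcon, hnorm, hFg]
      -- now the Π p test works
      have hbpos : 0 < ‖(p : Y)‖ := by nlinarith [mul_pos hC hβ]
      have hden : 0 < B * ‖(p : Y)‖ + D₀ * ‖D (p : Y)‖ := by positivity
      set s := (B * ‖(p : Y)‖ + D₀ * ‖D (p : Y)‖)⁻¹ with hsdef
      have hspos : 0 < s := inv_pos.mpr hden
      refine ⟨0, zero_mem _, s • Pi p,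
        Submodule.smul_mem _ _ (LinearMap.mem_range_self Pi p), ?_, ?_⟩
      · simp only [norm_zero, map_smul, norm_smul, Real.norm_eq_abs, abs_of_pos hspos]
        have hPi := h2 p
        have hDPi := h3 p
        have hs1 : s * (B * ‖(p : Y)‖ + D₀ * ‖D (p : Y)‖) = 1 :=
          inv_mul_cancel₀ (ne_of_gt hden)
        have e1 : s * ‖Pi p‖ ≤ s * (B * ‖(p : Y)‖) :=
          mul_le_mul_of_nonneg_left hPi hspos.le
        have e2 : s * ‖D (Pi p)‖ ≤ s * (D₀ * ‖D (p : Y)‖) :=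
          mul_le_mul_of_nonneg_left hDPi hspos.le
        have f1 : (s * ‖Pi p‖) ^ 2 ≤ (s * (B * ‖(p : Y)‖)) ^ 2 :=
          pow_le_pow_left₀ (mul_nonneg hspos.le (norm_nonneg _)) e1 2
        have f2 : (s * ‖D (Pi p)‖) ^ 2 ≤ (s * (D₀ * ‖D (p : Y)‖)) ^ 2 :=
          pow_le_pow_left₀ (mul_nonneg hspos.le (norm_nonneg _)) e2 2
        have quad : ∀ x y : ℝ, 0 ≤ x → 0 ≤ y → x + y = 1 → x ^ 2 + y ^ 2 ≤ 1 := by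
          intro x y hx hy hxy
          nlinarith
        have hq := quad (s * (B * ‖(p : Y)‖)) (s * (D₀ * ‖D (p : Y)‖))
          (mul_nonneg hspos.le (mul_nonneg hB.le hb0))
          (mul_nonneg hspos.le (mul_nonneg hD₀.le hc0))
          (by rw [← mul_add]; exact hs1)
        linarith [f1, f2, hq]
      · simp only [map_smul, real_inner_smul_right, inner_zero_right]
        have hPp := h1 p
        have hDPi := h3 p
        have huDPi : -(‖u‖ * (D₀ * ‖D (p : Y)‖)) ≤ ⟪u, D (Pi p)⟫ := by
          have h := abs_real_inner_le_norm u (D (Pi p))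
          cases' abs_le.mp h with hl _
          have h5 : ‖u‖ * ‖D (Pi p)‖ ≤ ‖u‖ * (D₀ * ‖D (p : Y)‖) :=
            mul_le_mul_of_nonneg_left hDPi ha0
          linarith [h5, hl]
        have key : β * (B * ‖(p : Y)‖ + D₀ * ‖D (p : Y)‖) ≤
            ⟪(p : Y), Pi p⟫ + ⟪u, D (Pi p)⟫ := by
          have hAb : (B + 2 * D₀) * β ≤ A * ‖(p : Y)‖ ^ 2 := by
            have := mul_le_mul_of_nonneg_left hb2 hA.le
            calc (B + 2 * D₀) * β = A * (((B + 2 * D₀) / A) * β) := by field_simp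
              _ ≤ A * ‖(p : Y)‖ ^ 2 := this
          have hclt : ‖D (p : Y)‖ ≤ β := hcase1.le
          have arith : ∀ x y z : ℝ, 0 ≤ x → x ≤ 1 → 0 ≤ y → y ≤ 1 → 0 ≤ z → z ≤ β →
              β ≤ 1 → β * (B * y + D₀ * z) + x * (D₀ * z) ≤ (B + 2 * D₀) * β := by
            intro x y z hx hx1 hy hy1 hz hzβ hβ1'
            nlinarith [mul_nonneg (mul_nonneg hB.le hβ.le) (sub_nonneg.mpr hy1),
              mul_nonneg hD₀.le (mul_nonneg hβ.le (sub_nonneg.mpr hzβ)),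
              mul_nonneg hD₀.le (mul_nonneg hx (sub_nonneg.mpr hzβ)),
              mul_nonneg hD₀.le (mul_nonneg hβ.le (sub_nonneg.mpr hx1)),
              mul_nonneg hD₀.le (mul_nonneg hβ.le (sub_nonneg.mpr hβ1'))]
          have harith := arith ‖u‖ ‖(p : Y)‖ ‖D (p : Y)‖ ha0 ha1 hb0 hb1 hc0 hclt hβle1
          have hPp' : A * ‖(p : Y)‖ ^ 2 ≤ ⟪(p : Y), Pi p⟫ := hPp
          linarith [hPp', hAb, huDPi, harith]
        have hs1' : s * (B * ‖(p : Y)‖ + D₀ * ‖D (p : Y)‖) = 1 :=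
          inv_mul_cancel₀ (ne_of_gt hden)
        have ht : s * (β * (B * ‖(p : Y)‖ + D₀ * ‖D (p : Y)‖)) = β := by
          calc s * (β * (B * ‖(p : Y)‖ + D₀ * ‖D (p : Y)‖))
              = β * (s * (B * ‖(p : Y)‖ + D₀ * ‖D (p : Y)‖)) := by ring
            _ = β := by rw [hs1', mul_one]
        calc β = s * (β * (B * ‖(p : Y)‖ + D₀ * ‖D (p : Y)‖)) := ht.symm
          _ ≤ s * (⟪(p : Y), Pi p⟫ + ⟪u, D (Pi p)⟫) :=
            mul_le_mul_of_nonneg_left key hspos.le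
          _ = s * ⟪(p : Y), Pi p⟫ + s * ⟪u, D (Pi p)⟫ + 0 := by ring
          _ ≤ _ := by norm_num
end

section
/- Let N, E, A ∈ ℝ² be affinely independent, M = conv{N, E, A}, G = (N + E + A)/3 its centroid. Let τ = (N − E)/‖N − E‖ and let n be the unit vector orthogonal to N − E with ⟨n, A − E⟩ > 0. Let φ be a C¹ vector field on a neighborhood of M whose divergence (trace of the derivative) is constant on M, and whose normal trace vanishes on the segments [N, A] and [E, A] (i.e. ⟨φ(x), ν⟩ = 0 for all x in the segment, ν a unit normal of the segment). Set α = ∫₀^{‖N−E‖} ⟨φ(E + s·τ), n⟩ ds and α₁ = ∫₀^{‖N−E‖} s·⟨φ(E + s·τ), n⟩ ds. Then ∫_M φ(x) dx = −(α₁·τ + α·(E − G)). (Key divergence identity established in the proof of Lemma 2.) -/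
open MeasureTheory
open scoped RealInnerProductSpace

open Set

def stdSimplex2 : Set (ℝ × ℝ) := {y | 0 ≤ y.1 ∧ 0 ≤ y.2 ∧ y.1 + y.2 ≤ 1}

lemma stdSimplex2_eq : stdSimplex2 = convexHull ℝ {((0:ℝ),(0:ℝ)), (1,0), (0,1)} := by
  apply Subset.antisymm
  · rintro ⟨p, q⟩ ⟨hp, hq, hpq⟩
    have key := (convex_convexHull ℝ ({((0:ℝ),(0:ℝ)), (1,0), (0,1)} : Set (ℝ×ℝ))).sum_mem
      (t := Finset.univ (α := Fin 3)) (w := ![1 - p - q, p, q])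
      (z := ![((0:ℝ),(0:ℝ)), (1,0), (0,1)])
      (by intro i _; fin_cases i <;> simp <;> linarith)
      (by simp [Fin.sum_univ_three]; ring)
      (by intro i _; fin_cases i <;> exact subset_convexHull ℝ _ (by simp))
    simpa [Fin.sum_univ_three, Prod.ext_iff] using key
  · apply convexHull_min
    · rintro x hx
      simp only [mem_insert_iff, mem_singleton_iff] at hx
      rcases hx with rfl | rfl | rfl <;> exact ⟨by norm_num, by norm_num, by norm_num⟩
    · rintro ⟨a1, a2⟩ ⟨ha1, ha2, ha3⟩ ⟨b1, b2⟩ ⟨hb1, hb2, hb3⟩ s t hs ht hst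
      simp only [stdSimplex2, Prod.smul_mk, Prod.mk_add_mk, smul_eq_mul, mem_setOf_eq]
      refine ⟨by nlinarith, by nlinarith, by nlinarith⟩

lemma isCompact_stdSimplex2 : IsCompact stdSimplex2 := by
  rw [stdSimplex2_eq]
  exact (Set.toFinite _).isCompact_convexHull ℝ

lemma measurableSet_stdSimplex2 : MeasurableSet stdSimplex2 :=
  (isCompact_stdSimplex2.isClosed).measurableSet

lemma convex_stdSimplex2 : Convex ℝ stdSimplex2 := by
  rw [stdSimplex2_eq]; exact convex_convexHull ℝ _

lemma halfB (v : ℝ×ℝ → ℝ) (V : Set (ℝ×ℝ)) (hV : IsOpen V) (hΔV : stdSimplex2 ⊆ V)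
    (hv : ContDiffOn ℝ 1 v V) :
    ∫ y in stdSimplex2, fderiv ℝ v y (0,1)
      = ∫ t in (0:ℝ)..1, (v (t, 1-t) - v (t, 0)) := by
  set F : ℝ×ℝ → ℝ := fun y => fderiv ℝ v y (0,1) with hF
  have hvd : ∀ y ∈ V, HasFDerivAt v (fderiv ℝ v y) y := fun y hy =>
    (((hv.differentiableOn one_ne_zero).differentiableAt (hV.mem_nhds hy))).hasFDerivAt
  have hFcont : ContinuousOn F V :=
    (hv.continuousOn_fderiv_of_isOpen hV le_rfl).clm_apply continuousOn_const
  have hInt : Integrable (stdSimplex2.indicator F) :=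
    ((hFcont.mono hΔV).integrableOn_compact isCompact_stdSimplex2).integrable_indicator
      measurableSet_stdSimplex2
  have step1 : ∫ y in stdSimplex2, F y = ∫ y, stdSimplex2.indicator F y :=
    (integral_indicator measurableSet_stdSimplex2).symm
  have step2 : ∫ y, stdSimplex2.indicator F y
      = ∫ p : ℝ, ∫ q : ℝ, stdSimplex2.indicator F (p, q) := by
    rw [MeasureTheory.Measure.volume_eq_prod]
    exact MeasureTheory.integral_prod _ (by rwa [← MeasureTheory.Measure.volume_eq_prod])
  have inner : ∀ p : ℝ, (∫ q : ℝ, stdSimplex2.indicator F (p, q))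
      = (Set.Icc (0:ℝ) 1).indicator (fun p => v (p, 1-p) - v (p, 0)) p := by
    intro p
    by_cases hp : 0 ≤ p ∧ p ≤ 1
    · obtain ⟨hp0, hp1⟩ := hp
      have hslice : (fun q => stdSimplex2.indicator F (p, q))
          = (Set.Icc (0:ℝ) (1-p)).indicator (fun q => F (p, q)) := by
        funext q
        by_cases hq : q ∈ Set.Icc (0:ℝ) (1-p)
        · rw [Set.indicator_of_mem hq]
          exact Set.indicator_of_mem (by exact ⟨hp0, hq.1, by linarith [hq.2]⟩) _
        · rw [Set.indicator_of_notMem hq]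
          refine Set.indicator_of_notMem (fun hmem => hq ⟨hmem.2.1, by
            have := hmem.2.2; simp only at this ⊢; linarith⟩) _
      have hsub : Set.uIcc (0:ℝ) (1-p) ⊆ {q | (p, q) ∈ stdSimplex2} := by
        rw [Set.uIcc_of_le (by linarith)]
        exact fun q hq => ⟨hp0, hq.1, by linarith [hq.2]⟩
      have hderiv : ∀ q ∈ Set.uIcc (0:ℝ) (1-p),
          HasDerivAt (fun q => v (p, q)) (F (p, q)) q := by
        intro q hq
        have h1 : HasDerivAt (fun q : ℝ => (p, q)) ((0:ℝ), (1:ℝ)) q :=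
          (hasDerivAt_const q p).prodMk (hasDerivAt_id q)
        exact (hvd (p, q) (hΔV (hsub hq))).comp_hasDerivAt q h1
      have hti : IntervalIntegrable (fun q => F (p, q)) volume 0 (1-p) := by
        apply ContinuousOn.intervalIntegrable
        exact hFcont.comp (Continuous.continuousOn (by continuity))
          (fun q hq => hΔV (hsub hq))
      rw [hslice, MeasureTheory.integral_indicator measurableSet_Icc,
        MeasureTheory.integral_Icc_eq_integral_Ioc,
        ← intervalIntegral.integral_of_le (by linarith : (0:ℝ) ≤ 1-p),
        intervalIntegral.integral_eq_sub_of_hasDerivAt hderiv hti,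
        Set.indicator_of_mem (Set.mem_Icc.2 ⟨hp0, hp1⟩)]
    · have hslice : (fun q => stdSimplex2.indicator F (p, q)) = fun _ => (0:ℝ) := by
        funext q
        refine Set.indicator_of_notMem (fun hmem => hp ⟨hmem.1, by
          obtain ⟨h1, h2, h3⟩ := hmem; simp only at *; linarith⟩) _
      rw [hslice, integral_zero, Set.indicator_of_notMem (by simpa [Set.mem_Icc] using hp)]
  calc ∫ y in stdSimplex2, F y = ∫ p : ℝ, ∫ q : ℝ, stdSimplex2.indicator F (p, q) := by
        rw [step1, step2]
    _ = ∫ p : ℝ, (Set.Icc (0:ℝ) 1).indicator (fun p => v (p, 1-p) - v (p, 0)) p := by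
        congr 1; funext p; exact inner p
    _ = ∫ p in Set.Icc (0:ℝ) 1, (v (p, 1-p) - v (p, 0)) :=
        MeasureTheory.integral_indicator measurableSet_Icc
    _ = ∫ t in (0:ℝ)..1, (v (t, 1-t) - v (t, 0)) := by
        rw [MeasureTheory.integral_Icc_eq_integral_Ioc,
          ← intervalIntegral.integral_of_le (by norm_num : (0:ℝ) ≤ 1)]

lemma swap_stdSimplex2 : Prod.swap '' stdSimplex2 = stdSimplex2 := by
  ext ⟨a, b⟩
  constructor
  · rintro ⟨⟨x, y⟩, ⟨h1, h2, h3⟩, heq⟩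
    simp only [Prod.swap_prod_mk, Prod.mk.injEq] at heq
    obtain ⟨rfl, rfl⟩ := heq
    exact ⟨h2, h1, by simpa [add_comm] using h3⟩
  · rintro ⟨h1, h2, h3⟩
    exact ⟨(b, a), ⟨h2, h1, by simpa [add_comm] using h3⟩, rfl⟩

lemma halfA (u : ℝ×ℝ → ℝ) (V : Set (ℝ×ℝ)) (hV : IsOpen V) (hΔV : stdSimplex2 ⊆ V)
    (hu : ContDiffOn ℝ 1 u V) :
    ∫ y in stdSimplex2, fderiv ℝ u y (1,0)
      = ∫ t in (0:ℝ)..1, (u (1-t, t) - u (0, t)) := by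
  set w : ℝ×ℝ → ℝ := fun y => u y.swap with hw
  set W : Set (ℝ×ℝ) := Prod.swap ⁻¹' V with hWdef
  have hWopen : IsOpen W := (continuous_swap).isOpen_preimage _ hV
  have hΔW : stdSimplex2 ⊆ W := by
    intro y hy
    have : y.swap ∈ Prod.swap '' stdSimplex2 := ⟨y, hy, rfl⟩
    rw [swap_stdSimplex2] at this
    exact hΔV this
  set σ : (ℝ×ℝ) →L[ℝ] (ℝ×ℝ) :=
    (ContinuousLinearMap.snd ℝ ℝ ℝ).prod (ContinuousLinearMap.fst ℝ ℝ ℝ) with hσ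
  have hσapp : ∀ y : ℝ×ℝ, σ y = y.swap := fun _ => rfl
  have hwCD : ContDiffOn ℝ 1 w W := by
    apply hu.comp (σ.contDiff.contDiffOn)
    intro y hy
    exact hy
  have key := halfB w W hWopen hΔW hwCD
  have hud : ∀ x ∈ V, HasFDerivAt u (fderiv ℝ u x) x := fun x hx =>
    (((hu.differentiableOn one_ne_zero).differentiableAt (hV.mem_nhds hx))).hasFDerivAt
  have hfd : ∀ y ∈ stdSimplex2, fderiv ℝ w y (0,1) = fderiv ℝ u y.swap (1,0) := by
    intro y hy
    have h1 : HasFDerivAt w ((fderiv ℝ u y.swap).comp σ) y := by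
      have := (hud y.swap (hΔW hy)).comp y (σ.hasFDerivAt (x := y))
      exact this
    rw [h1.fderiv]
    rfl
  have lhs_eq : ∫ y in stdSimplex2, fderiv ℝ w y (0,1)
      = ∫ y in stdSimplex2, fderiv ℝ u y.swap (1,0) := by
    apply MeasureTheory.setIntegral_congr_fun measurableSet_stdSimplex2
    intro y hy
    exact hfd y hy
  have swap_int : ∫ y in stdSimplex2, fderiv ℝ u y.swap (1,0)
      = ∫ y in stdSimplex2, fderiv ℝ u y (1,0) := by
    have hmp : MeasurePreserving (Prod.swap : ℝ×ℝ → ℝ×ℝ) volume volume := by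
      rw [MeasureTheory.Measure.volume_eq_prod]
      exact MeasureTheory.Measure.measurePreserving_swap
    have hemb : MeasurableEmbedding (Prod.swap : ℝ×ℝ → ℝ×ℝ) :=
      (MeasurableEquiv.prodComm : (ℝ×ℝ) ≃ᵐ (ℝ×ℝ)).measurableEmbedding
    have := hmp.setIntegral_image_emb hemb (fun y => fderiv ℝ u y (1,0)) stdSimplex2
    rw [swap_stdSimplex2] at this
    exact this.symm
  rw [lhs_eq, swap_int] at key
  rw [key]
  simp only [w, Prod.swap_prod_mk]

lemma edge_mem_hyp (t : ℝ) (ht : t ∈ Set.uIcc (0:ℝ) 1) : ((1-t, t) : ℝ×ℝ) ∈ stdSimplex2 := by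
  rw [Set.uIcc_of_le (by norm_num)] at ht
  refine ⟨?_, ?_, ?_⟩ <;> simp <;> linarith [ht.1, ht.2]

lemma edge_mem_hyp' (t : ℝ) (ht : t ∈ Set.uIcc (0:ℝ) 1) : ((t, 1-t) : ℝ×ℝ) ∈ stdSimplex2 := by
  rw [Set.uIcc_of_le (by norm_num)] at ht
  refine ⟨?_, ?_, ?_⟩ <;> simp <;> linarith [ht.1, ht.2]

lemma edge_mem_left (t : ℝ) (ht : t ∈ Set.uIcc (0:ℝ) 1) : ((0, t) : ℝ×ℝ) ∈ stdSimplex2 := by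
  rw [Set.uIcc_of_le (by norm_num)] at ht
  refine ⟨?_, ?_, ?_⟩ <;> simp <;> linarith [ht.1, ht.2]

lemma edge_mem_bot (t : ℝ) (ht : t ∈ Set.uIcc (0:ℝ) 1) : ((t, 0) : ℝ×ℝ) ∈ stdSimplex2 := by
  rw [Set.uIcc_of_le (by norm_num)] at ht
  refine ⟨?_, ?_, ?_⟩ <;> simp <;> linarith [ht.1, ht.2]

lemma simplex_div (u v : ℝ×ℝ → ℝ) (V : Set (ℝ×ℝ)) (hV : IsOpen V) (hΔV : stdSimplex2 ⊆ V)
    (hu : ContDiffOn ℝ 1 u V) (hv : ContDiffOn ℝ 1 v V) :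
    ∫ y in stdSimplex2, (fderiv ℝ u y (1,0) + fderiv ℝ v y (0,1))
      = (∫ t in (0:ℝ)..1, (u (1-t,t) + v (1-t,t)))
        - (∫ t in (0:ℝ)..1, u (0,t)) - (∫ t in (0:ℝ)..1, v (t,0)) := by
  have hfu : ContinuousOn (fun y => fderiv ℝ u y (1,0)) V :=
    (hu.continuousOn_fderiv_of_isOpen hV le_rfl).clm_apply continuousOn_const
  have hfv : ContinuousOn (fun y => fderiv ℝ v y (0,1)) V :=
    (hv.continuousOn_fderiv_of_isOpen hV le_rfl).clm_apply continuousOn_const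
  have hiu : IntegrableOn (fun y => fderiv ℝ u y (1,0)) stdSimplex2 :=
    (hfu.mono hΔV).integrableOn_compact isCompact_stdSimplex2
  have hiv : IntegrableOn (fun y => fderiv ℝ v y (0,1)) stdSimplex2 :=
    (hfv.mono hΔV).integrableOn_compact isCompact_stdSimplex2
  rw [MeasureTheory.integral_add hiu hiv, halfA u V hV hΔV hu, halfB v V hV hΔV hv]
  -- interval integrability of all edge restrictions
  have edgeCont : ∀ (γ : ℝ → ℝ×ℝ), Continuous γ → (∀ t ∈ Set.uIcc (0:ℝ) 1, γ t ∈ stdSimplex2) →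
      ∀ (f : ℝ×ℝ → ℝ), ContDiffOn ℝ 1 f V → IntervalIntegrable (fun t => f (γ t)) volume 0 1 := by
    intro γ hγ hmem f hf
    exact ((hf.continuousOn.comp hγ.continuousOn (fun t ht => hΔV (hmem t ht)))).intervalIntegrable
  have h1 : IntervalIntegrable (fun t => u (1-t, t)) volume 0 1 :=
    edgeCont _ ((continuous_const.sub continuous_id).prodMk continuous_id) edge_mem_hyp u hu
  have h2 : IntervalIntegrable (fun t => u (0, t)) volume 0 1 :=
    edgeCont _ (continuous_const.prodMk continuous_id) edge_mem_left u hu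
  have h3 : IntervalIntegrable (fun t => v (t, 1-t)) volume 0 1 :=
    edgeCont _ (continuous_id.prodMk (continuous_const.sub continuous_id)) edge_mem_hyp' v hv
  have h4 : IntervalIntegrable (fun t => v (t, 0)) volume 0 1 :=
    edgeCont _ (continuous_id.prodMk continuous_const) edge_mem_bot v hv
  have h5 : IntervalIntegrable (fun t => v (1-t, t)) volume 0 1 :=
    edgeCont _ ((continuous_const.sub continuous_id).prodMk continuous_id) edge_mem_hyp v hv
  have hsub : (∫ t in (0:ℝ)..1, v (t, 1-t)) = ∫ t in (0:ℝ)..1, v (1-t, t) := by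
    have : (fun t : ℝ => v (t, 1-t)) = fun t => (fun x : ℝ => v (1-x, x)) (1 - t) := by
      funext t; norm_num
    rw [this, intervalIntegral.integral_comp_sub_left (fun x : ℝ => v (1-x, x)) 1]
    norm_num
  rw [intervalIntegral.integral_sub h1 h2, intervalIntegral.integral_sub h3 h4, hsub,
    intervalIntegral.integral_add h1 h5]
  ring

lemma fderiv_fst_apply (y w : ℝ×ℝ) : fderiv ℝ (fun y : ℝ×ℝ => y.1) y w = w.1 := by
  rw [(hasFDerivAt_fst (p := y)).fderiv]; rfl

lemma fderiv_snd_apply (y w : ℝ×ℝ) : fderiv ℝ (fun y : ℝ×ℝ => y.2) y w = w.2 := by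
  rw [(hasFDerivAt_snd (p := y)).fderiv]; rfl

lemma hasFDerivAt_mul12 (y : ℝ×ℝ) :
    HasFDerivAt (fun y : ℝ×ℝ => y.1 * y.2)
      (y.1 • ContinuousLinearMap.snd ℝ ℝ ℝ + y.2 • ContinuousLinearMap.fst ℝ ℝ ℝ) y :=
  (hasFDerivAt_fst (p := y)).mul (hasFDerivAt_snd (p := y))

lemma simplex_vol : ∫ y in stdSimplex2, (1:ℝ) = 1/2 := by
  have key := simplex_div (fun y => y.1) (fun _ => (0:ℝ)) Set.univ isOpen_univ
    (Set.subset_univ _) (contDiff_fst.contDiffOn) (contDiffOn_const)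
  have e1 : ∫ y in stdSimplex2,
      (fderiv ℝ (fun y : ℝ×ℝ => y.1) y (1,0) + fderiv ℝ (fun _ : ℝ×ℝ => (0:ℝ)) y (0,1))
      = ∫ y in stdSimplex2, (1:ℝ) := by
    apply MeasureTheory.setIntegral_congr_fun measurableSet_stdSimplex2
    intro y _
    simp [fderiv_fst_apply, fderiv_const]
  rw [e1] at key
  have c1 : (∫ t in (0:ℝ)..1,
      ((fun y : ℝ×ℝ => y.1) (1-t, t) + (fun _ : ℝ×ℝ => (0:ℝ)) (1-t, t))) = 1/2 := by
    rw [intervalIntegral.integral_congr (g := fun t : ℝ => 1 - t) (by intro t _; norm_num)]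
    rw [intervalIntegral.integral_sub intervalIntegrable_const
      intervalIntegral.intervalIntegrable_id, intervalIntegral.integral_const, integral_id]
    norm_num
  rw [key, c1]
  norm_num

lemma simplex_snd : ∫ y in stdSimplex2, y.2 = 1/6 := by
  have key := simplex_div (fun y => y.1 * y.2) (fun _ => (0:ℝ)) Set.univ isOpen_univ
    (Set.subset_univ _) ((contDiff_fst.mul contDiff_snd).contDiffOn) (contDiffOn_const)
  have e1 : ∫ y in stdSimplex2,
      (fderiv ℝ (fun y : ℝ×ℝ => y.1 * y.2) y (1,0) + fderiv ℝ (fun _ : ℝ×ℝ => (0:ℝ)) y (0,1))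
      = ∫ y in stdSimplex2, y.2 := by
    apply MeasureTheory.setIntegral_congr_fun measurableSet_stdSimplex2
    intro y _
    beta_reduce
    rw [(hasFDerivAt_mul12 y).fderiv]
    simp
  rw [e1] at key
  have c1 : (∫ t in (0:ℝ)..1,
      ((fun y : ℝ×ℝ => y.1 * y.2) (1-t, t) + (fun _ : ℝ×ℝ => (0:ℝ)) (1-t, t))) = 1/6 := by
    rw [intervalIntegral.integral_congr (g := fun t : ℝ => t - t^2) (by intro t _; simp; ring)]
    rw [intervalIntegral.integral_sub intervalIntegral.intervalIntegrable_id
        ((continuous_pow 2).intervalIntegrable 0 1), integral_id, integral_pow]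
    norm_num
  rw [key, c1]
  norm_num

lemma simplex_fst : ∫ y in stdSimplex2, y.1 = 1/6 := by
  have key := simplex_div (fun _ => (0:ℝ)) (fun y => y.1 * y.2) Set.univ isOpen_univ
    (Set.subset_univ _) (contDiffOn_const) ((contDiff_fst.mul contDiff_snd).contDiffOn)
  have e1 : ∫ y in stdSimplex2,
      (fderiv ℝ (fun _ : ℝ×ℝ => (0:ℝ)) y (1,0) + fderiv ℝ (fun y : ℝ×ℝ => y.1 * y.2) y (0,1))
      = ∫ y in stdSimplex2, y.1 := by
    apply MeasureTheory.setIntegral_congr_fun measurableSet_stdSimplex2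
    intro y _
    beta_reduce
    rw [(hasFDerivAt_mul12 y).fderiv]
    simp
  rw [e1] at key
  have c1 : (∫ t in (0:ℝ)..1,
      ((fun _ : ℝ×ℝ => (0:ℝ)) (1-t, t) + (fun y : ℝ×ℝ => y.1 * y.2) (1-t, t))) = 1/6 := by
    rw [intervalIntegral.integral_congr (g := fun t : ℝ => t - t^2) (by intro t _; simp; ring)]
    rw [intervalIntegral.integral_sub intervalIntegral.intervalIntegrable_id
        ((continuous_pow 2).intervalIntegrable 0 1), integral_id, integral_pow]
    norm_num
  rw [key, c1]
  norm_num

lemma simplex_integrals (g₁ g₂ : ℝ×ℝ → ℝ) (V : Set (ℝ×ℝ)) (hV : IsOpen V)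
    (hΔV : stdSimplex2 ⊆ V)
    (h1 : ContDiffOn ℝ 1 g₁ V) (h2 : ContDiffOn ℝ 1 g₂ V) (c : ℝ)
    (hdiv : ∀ y ∈ stdSimplex2, fderiv ℝ g₁ y (1,0) + fderiv ℝ g₂ y (0,1) = c)
    (hleft : ∀ t ∈ Set.Icc (0:ℝ) 1, g₁ (0, t) = 0)
    (hhyp : ∀ t ∈ Set.Icc (0:ℝ) 1, g₁ (1-t, t) + g₂ (1-t, t) = 0) :
    (∫ y in stdSimplex2, g₂ y) = (∫ t in (0:ℝ)..1, g₂ (t,0)) / 3 ∧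
    (∫ y in stdSimplex2, g₁ y) = (∫ t in (0:ℝ)..1, g₂ (t,0)) / 3
      - ∫ t in (0:ℝ)..1, t * g₂ (t,0) := by
  have hIcc : Set.uIcc (0:ℝ) 1 = Set.Icc (0:ℝ) 1 := Set.uIcc_of_le (by norm_num)
  set β := ∫ t in (0:ℝ)..1, g₂ (t,0) with hβ
  set β₁ := ∫ t in (0:ℝ)..1, t * g₂ (t,0) with hβ₁
  have hd1 : ∀ y ∈ V, HasFDerivAt g₁ (fderiv ℝ g₁ y) y := fun y hy =>
    ((h1.differentiableOn one_ne_zero).differentiableAt (hV.mem_nhds hy)).hasFDerivAt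
  have hd2 : ∀ y ∈ V, HasFDerivAt g₂ (fderiv ℝ g₂ y) y := fun y hy =>
    ((h2.differentiableOn one_ne_zero).differentiableAt (hV.mem_nhds hy)).hasFDerivAt
  have hvol : (volume stdSimplex2).toReal = 1/2 := by
    have := simplex_vol
    rwa [MeasureTheory.setIntegral_const, smul_eq_mul, mul_one] at this
  have hig1 : IntegrableOn g₁ stdSimplex2 :=
    (h1.continuousOn.mono hΔV).integrableOn_compact isCompact_stdSimplex2
  have hig2 : IntegrableOn g₂ stdSimplex2 :=
    (h2.continuousOn.mono hΔV).integrableOn_compact isCompact_stdSimplex2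
  -- First application : c/2 = -β
  have key1 := simplex_div g₁ g₂ V hV hΔV h1 h2
  have l1 : ∫ y in stdSimplex2, (fderiv ℝ g₁ y (1,0) + fderiv ℝ g₂ y (0,1)) = c/2 := by
    rw [MeasureTheory.setIntegral_congr_fun measurableSet_stdSimplex2 (g := fun _ => c) hdiv,
      MeasureTheory.setIntegral_const, MeasureTheory.measureReal_def, hvol, smul_eq_mul]
    ring
  have r1a : (∫ t in (0:ℝ)..1, (g₁ (1-t,t) + g₂ (1-t,t))) = 0 := by
    rw [intervalIntegral.integral_congr (g := fun _ => (0:ℝ))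
      (fun t ht => hhyp t (hIcc ▸ ht))]
    simp
  have r1b : (∫ t in (0:ℝ)..1, g₁ (0,t)) = 0 := by
    rw [intervalIntegral.integral_congr (g := fun _ => (0:ℝ))
      (fun t ht => hleft t (hIcc ▸ ht))]
    simp
  rw [l1, r1a, r1b] at key1
  have hc : c = -2 * β := by rw [hβ]; linarith [key1]
  -- Second application, weight y.2 : c/6 + I₂ = 0
  have hu2 : ContDiffOn ℝ 1 (fun y : ℝ×ℝ => y.2 * g₁ y) V :=
    (contDiff_snd.contDiffOn).mul h1
  have hv2 : ContDiffOn ℝ 1 (fun y : ℝ×ℝ => y.2 * g₂ y) V :=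
    (contDiff_snd.contDiffOn).mul h2
  have key2 := simplex_div (fun y : ℝ×ℝ => y.2 * g₁ y) (fun y : ℝ×ℝ => y.2 * g₂ y)
    V hV hΔV hu2 hv2
  have l2 : ∫ y in stdSimplex2,
      (fderiv ℝ (fun y : ℝ×ℝ => y.2 * g₁ y) y (1,0)
        + fderiv ℝ (fun y : ℝ×ℝ => y.2 * g₂ y) y (0,1))
      = c/6 + ∫ y in stdSimplex2, g₂ y := by
    rw [MeasureTheory.setIntegral_congr_fun measurableSet_stdSimplex2
      (g := fun y => c * y.2 + g₂ y) ?_]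
    · rw [MeasureTheory.integral_add (f := fun y : ℝ×ℝ => c * y.2) (g := g₂)
          (μ := volume.restrict stdSimplex2)
        (show IntegrableOn (fun y : ℝ×ℝ => c * y.2) stdSimplex2 volume from
          ((continuous_const.mul continuous_snd).continuousOn).integrableOn_compact
          isCompact_stdSimplex2).integrable hig2.integrable,
        MeasureTheory.integral_const_mul _ _, simplex_snd]
      ring_nf
    · intro y hy
      have hyV := hΔV hy
      beta_reduce
      rw [(show HasFDerivAt (fun y : ℝ×ℝ => y.2 * g₁ y) _ y from
          (hasFDerivAt_snd (p := y)).mul (hd1 y hyV)).fderiv,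
        (show HasFDerivAt (fun y : ℝ×ℝ => y.2 * g₂ y) _ y from
          (hasFDerivAt_snd (p := y)).mul (hd2 y hyV)).fderiv]
      have := hdiv y hy
      simp only [ContinuousLinearMap.add_apply, ContinuousLinearMap.coe_smul',
        Pi.smul_apply, smul_eq_mul, ContinuousLinearMap.coe_snd']
      linear_combination y.2 * this
  have r2a : (∫ t in (0:ℝ)..1,
      ((fun y : ℝ×ℝ => y.2 * g₁ y) (1-t,t) + (fun y : ℝ×ℝ => y.2 * g₂ y) (1-t,t))) = 0 := by
    rw [intervalIntegral.integral_congr (g := fun _ => (0:ℝ)) ?_]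
    · simp
    · intro t ht
      have := hhyp t (hIcc ▸ ht)
      show (t : ℝ) * g₁ (1-t, t) + t * g₂ (1-t, t) = 0
      linear_combination t * this
  have r2b : (∫ t in (0:ℝ)..1, ((fun y : ℝ×ℝ => y.2 * g₁ y) (0,t))) = 0 := by
    rw [intervalIntegral.integral_congr (g := fun _ => (0:ℝ)) ?_]
    · simp
    · intro t ht
      have := hleft t (hIcc ▸ ht)
      beta_reduce
      rw [this, mul_zero]
  have r2c : (∫ t in (0:ℝ)..1, ((fun y : ℝ×ℝ => y.2 * g₂ y) (t,0))) = 0 := by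
    rw [intervalIntegral.integral_congr (g := fun _ => (0:ℝ)) ?_]
    · simp
    · intro t _
      beta_reduce
      rw [zero_mul]
  rw [l2, r2a, r2b, r2c] at key2
  have hI2 : (∫ y in stdSimplex2, g₂ y) = β / 3 := by
    rw [hc] at key2; linarith [key2]
  -- Third application, weight y.1 : c/6 + I₁ = -β₁
  have hu3 : ContDiffOn ℝ 1 (fun y : ℝ×ℝ => y.1 * g₁ y) V :=
    (contDiff_fst.contDiffOn).mul h1
  have hv3 : ContDiffOn ℝ 1 (fun y : ℝ×ℝ => y.1 * g₂ y) V :=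
    (contDiff_fst.contDiffOn).mul h2
  have key3 := simplex_div (fun y : ℝ×ℝ => y.1 * g₁ y) (fun y : ℝ×ℝ => y.1 * g₂ y)
    V hV hΔV hu3 hv3
  have l3 : ∫ y in stdSimplex2,
      (fderiv ℝ (fun y : ℝ×ℝ => y.1 * g₁ y) y (1,0)
        + fderiv ℝ (fun y : ℝ×ℝ => y.1 * g₂ y) y (0,1))
      = c/6 + ∫ y in stdSimplex2, g₁ y := by
    rw [MeasureTheory.setIntegral_congr_fun measurableSet_stdSimplex2
      (g := fun y => c * y.1 + g₁ y) ?_]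
    · rw [MeasureTheory.integral_add (f := fun y : ℝ×ℝ => c * y.1) (g := g₁)
          (μ := volume.restrict stdSimplex2)
        (show IntegrableOn (fun y : ℝ×ℝ => c * y.1) stdSimplex2 volume from
          ((continuous_const.mul continuous_fst).continuousOn).integrableOn_compact
          isCompact_stdSimplex2).integrable hig1.integrable,
        MeasureTheory.integral_const_mul _ _, simplex_fst]
      ring_nf
    · intro y hy
      have hyV := hΔV hy
      beta_reduce
      rw [(show HasFDerivAt (fun y : ℝ×ℝ => y.1 * g₁ y) _ y from
          (hasFDerivAt_fst (p := y)).mul (hd1 y hyV)).fderiv,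
        (show HasFDerivAt (fun y : ℝ×ℝ => y.1 * g₂ y) _ y from
          (hasFDerivAt_fst (p := y)).mul (hd2 y hyV)).fderiv]
      have := hdiv y hy
      simp only [ContinuousLinearMap.add_apply, ContinuousLinearMap.coe_smul',
        Pi.smul_apply, smul_eq_mul, ContinuousLinearMap.coe_fst']
      linear_combination y.1 * this
  have r3a : (∫ t in (0:ℝ)..1,
      ((fun y : ℝ×ℝ => y.1 * g₁ y) (1-t,t) + (fun y : ℝ×ℝ => y.1 * g₂ y) (1-t,t))) = 0 := by
    rw [intervalIntegral.integral_congr (g := fun _ => (0:ℝ)) ?_]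
    · simp
    · intro t ht
      have := hhyp t (hIcc ▸ ht)
      show (1 - t) * g₁ (1-t, t) + (1 - t) * g₂ (1-t, t) = 0
      linear_combination (1 - t) * this
  have r3b : (∫ t in (0:ℝ)..1, ((fun y : ℝ×ℝ => y.1 * g₁ y) (0,t))) = 0 := by
    rw [intervalIntegral.integral_congr (g := fun _ => (0:ℝ)) ?_]
    · simp
    · intro t _
      beta_reduce
      rw [zero_mul]
  have r3c : (∫ t in (0:ℝ)..1, ((fun y : ℝ×ℝ => y.1 * g₂ y) (t,0))) = β₁ := rfl
  rw [l3, r3a, r3b, r3c] at key3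
  have hI1 : (∫ y in stdSimplex2, g₁ y) = β / 3 - β₁ := by
    rw [hc] at key3; linarith [key3]
  exact ⟨hI2, hI1⟩

open scoped RealInnerProductSpace

noncomputable def rot2 (v : EuclideanSpace ℝ (Fin 2)) : EuclideanSpace ℝ (Fin 2) :=
  (WithLp.equiv 2 (Fin 2 → ℝ)).symm ![-(v 1), v 0]

lemma rot2_apply0 (v : EuclideanSpace ℝ (Fin 2)) : rot2 v 0 = -(v 1) := rfl
lemma rot2_apply1 (v : EuclideanSpace ℝ (Fin 2)) : rot2 v 1 = v 0 := rfl

lemma inner2 (x y : EuclideanSpace ℝ (Fin 2)) : ⟪x, y⟫ = x 0 * y 0 + x 1 * y 1 := by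
  rw [PiLp.inner_apply, Fin.sum_univ_two]
  simp [mul_comm]

lemma norm2_sq (x : EuclideanSpace ℝ (Fin 2)) : ‖x‖^2 = x 0 ^ 2 + x 1 ^ 2 := by
  rw [← real_inner_self_eq_norm_sq, inner2]; ring

lemma norm_rot2 (v : EuclideanSpace ℝ (Fin 2)) : ‖rot2 v‖ = ‖v‖ := by
  have h1 : ‖rot2 v‖^2 = ‖v‖^2 := by
    rw [norm2_sq, norm2_sq, rot2_apply0, rot2_apply1]; ring
  have := norm_nonneg (rot2 v); have := norm_nonneg v
  nlinarith

lemma trace2 (L : (ℝ×ℝ) →ₗ[ℝ] (ℝ×ℝ)) :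
    LinearMap.trace ℝ (ℝ×ℝ) L = (L (1,0)).1 + (L (0,1)).2 := by
  rw [LinearMap.trace_eq_matrix_trace ℝ (Module.Basis.finTwoProd ℝ), Matrix.trace_fin_two]
  simp [LinearMap.toMatrix_apply]

lemma euclid_ext {x y : EuclideanSpace ℝ (Fin 2)} (h0 : x 0 = y 0) (h1 : x 1 = y 1) : x = y := by
  ext i
  fin_cases i <;> assumption

lemma exists_e (w₁ w₂ : EuclideanSpace ℝ (Fin 2)) (h : LinearIndependent ℝ ![w₁, w₂]) :
    ∃ e : (ℝ×ℝ) ≃ₗ[ℝ] (EuclideanSpace ℝ (Fin 2)), ∀ p q : ℝ, e (p,q) = p • w₁ + q • w₂ := by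
  have hcard : Fintype.card (Fin 2) = Module.finrank ℝ (EuclideanSpace ℝ (Fin 2)) := by
    simp [finrank_euclideanSpace]
  let b := basisOfLinearIndependentOfCardEqFinrank h hcard
  have hb : ∀ i, b i = ![w₁, w₂] i := fun i => by
    simp [b, coe_basisOfLinearIndependentOfCardEqFinrank]
  refine ⟨(Module.Basis.finTwoProd ℝ).equiv b (Equiv.refl _), fun p q => ?_⟩
  have hsp : (p, q) = p • ((Module.Basis.finTwoProd ℝ) 0) + q • ((Module.Basis.finTwoProd ℝ) 1) := by
    simp [Module.Basis.finTwoProd_zero, Module.Basis.finTwoProd_one, Prod.ext_iff]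
  rw [hsp, map_add, LinearEquiv.map_smul, LinearEquiv.map_smul, Module.Basis.equiv_apply, Module.Basis.equiv_apply]
  simp [hb]

lemma exists_m : ∃ m : (ℝ×ℝ) ≃ᵐ (EuclideanSpace ℝ (Fin 2)),
    MeasureTheory.MeasurePreserving m volume volume ∧
    ∀ y : ℝ×ℝ, (m y) 0 = y.1 ∧ (m y) 1 = y.2 := by
  refine ⟨(MeasurableEquiv.finTwoArrow (α := ℝ)).symm.trans
    (MeasurableEquiv.toLp 2 (Fin 2 → ℝ)), ?_, ?_⟩
  · exact ((EuclideanSpace.volume_preserving_symm_measurableEquiv_toLp (Fin 2)).symm _).comp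
      ((volume_preserving_finTwoArrow ℝ).symm _)
  · intro y
    constructor <;> rfl

lemma exists_ehat (w₁ w₂ : EuclideanSpace ℝ (Fin 2)) :
    ∃ eh : (EuclideanSpace ℝ (Fin 2)) →L[ℝ] (EuclideanSpace ℝ (Fin 2)),
      ∀ x, eh x = x 0 • w₁ + x 1 • w₂ := by
  refine ⟨LinearMap.toContinuousLinearMap
    { toFun := fun x : EuclideanSpace ℝ (Fin 2) => x 0 • w₁ + x 1 • w₂
      map_add' := ?_
      map_smul' := ?_ }, fun x => rfl⟩
  · intro x y
    show (x + y) 0 • w₁ + (x + y) 1 • w₂ = (x 0 • w₁ + x 1 • w₂) + (y 0 • w₁ + y 1 • w₂)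
    have h0 : (x + y) 0 = x 0 + y 0 := rfl
    have h1 : (x + y) 1 = x 1 + y 1 := rfl
    rw [h0, h1, add_smul, add_smul]
    abel
  · intro c x
    show (c • x) 0 • w₁ + (c • x) 1 • w₂ = (RingHom.id ℝ) c • (x 0 • w₁ + x 1 • w₂)
    have h0 : (c • x) 0 = c * x 0 := rfl
    have h1 : (c • x) 1 = c * x 1 := rfl
    rw [h0, h1, RingHom.id_apply, smul_add, mul_smul, mul_smul]

lemma det_ehat (w₁ w₂ : EuclideanSpace ℝ (Fin 2))
    (eh : (EuclideanSpace ℝ (Fin 2)) →L[ℝ] (EuclideanSpace ℝ (Fin 2)))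
    (h : ∀ x, eh x = x 0 • w₁ + x 1 • w₂) :
    ContinuousLinearMap.det eh = w₁ 0 * w₂ 1 - w₂ 0 * w₁ 1 := by
  have : ContinuousLinearMap.det eh = LinearMap.det (eh : (EuclideanSpace ℝ (Fin 2)) →ₗ[ℝ] _) := rfl
  rw [this, ← LinearMap.det_toMatrix ((EuclideanSpace.basisFun (Fin 2) ℝ).toBasis),
    Matrix.det_fin_two]
  simp [LinearMap.toMatrix_apply, h, EuclideanSpace.basisFun_apply, EuclideanSpace.single_apply]

set_option maxHeartbeats 2000000

/-- Key divergence identity established in the proof of Lemma 2: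
for a C¹ vector field `φ` with constant divergence on the triangle
`M = conv {N, E, A}` whose normal trace vanishes on the edges `[N, A]` and `[E, A]`,
one has `∫_M φ = −(α₁ τ + α (E − G))`, where `α`, `α₁` are the flux and its first
moment across the edge `EN`. -/
theorem stmt3 (N E A : EuclideanSpace ℝ (Fin 2))
    (hindep : AffineIndependent ℝ ![N, E, A])
    (G : EuclideanSpace ℝ (Fin 2)) (hG : G = (1 / 3 : ℝ) • (N + E + A))
    (τ n : EuclideanSpace ℝ (Fin 2))
    (hτ : τ = (‖N - E‖)⁻¹ • (N - E))
    (hn1 : ‖n‖ = 1) (hn2 : ⟪n, N - E⟫ = 0) (hn3 : 0 < ⟪n, A - E⟫)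
    (φ : EuclideanSpace ℝ (Fin 2) → EuclideanSpace ℝ (Fin 2))
    (U : Set (EuclideanSpace ℝ (Fin 2))) (hU : IsOpen U)
    (hMU : convexHull ℝ {N, E, A} ⊆ U)
    (hφ : ContDiffOn ℝ 1 φ U)
    (c : ℝ)
    (hdiv : ∀ x ∈ convexHull ℝ ({N, E, A} : Set (EuclideanSpace ℝ (Fin 2))),
      LinearMap.trace ℝ (EuclideanSpace ℝ (Fin 2)) (fderiv ℝ φ x).toLinearMap = c)
    (hNA : ∀ x ∈ segment ℝ N A, ∀ ν : EuclideanSpace ℝ (Fin 2),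
      ‖ν‖ = 1 → ⟪ν, A - N⟫ = 0 → ⟪φ x, ν⟫ = 0)
    (hEA : ∀ x ∈ segment ℝ E A, ∀ ν : EuclideanSpace ℝ (Fin 2),
      ‖ν‖ = 1 → ⟪ν, A - E⟫ = 0 → ⟪φ x, ν⟫ = 0)
    (α α₁ : ℝ)
    (hα : α = ∫ s in (0 : ℝ)..‖N - E‖, ⟪φ (E + s • τ), n⟫)
    (hα₁ : α₁ = ∫ s in (0 : ℝ)..‖N - E‖, s * ⟪φ (E + s • τ), n⟫) :
    (∫ x in convexHull ℝ {N, E, A}, φ x) = -(α₁ • τ + α • (E - G)) := by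
  classical
  set w₁ : EuclideanSpace ℝ (Fin 2) := N - E with hw₁
  set w₂ : EuclideanSpace ℝ (Fin 2) := A - E with hw₂
  set L : ℝ := ‖N - E‖ with hLdef
  -- nondegeneracy
  have hNE : N ≠ E := by
    intro h
    exact (by decide : (0:Fin 3) ≠ 1)
      (hindep.injective (show ![N,E,A] 0 = ![N,E,A] 1 by simpa using h))
  have hANe : A ≠ N := by
    intro h
    exact (by decide : (2:Fin 3) ≠ 0)
      (hindep.injective (show ![N,E,A] 2 = ![N,E,A] 0 by simpa using h))
  have hL : 0 < L := by
    rw [hLdef]; exact norm_pos_iff.2 (sub_ne_zero.2 hNE)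
  have hlin : LinearIndependent ℝ ![w₁, w₂] := by
    have hli0 := (affineIndependent_iff_linearIndependent_vsub ℝ ![N,E,A] 1).mp hindep
    have hg : Function.Injective
        (fun i : Fin 2 => (![(⟨0, by decide⟩ : {x : Fin 3 // x ≠ 1}), ⟨2, by decide⟩] i)) := by
      decide
    have hcomp := hli0.comp _ hg
    have heq : ((fun i : {x : Fin 3 // x ≠ 1} => ![N,E,A] ↑i -ᵥ ![N,E,A] 1) ∘
        (fun i : Fin 2 => (![(⟨0, by decide⟩ : {x : Fin 3 // x ≠ 1}), ⟨2, by decide⟩] i)))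
        = ![w₁, w₂] := by
      funext i
      fin_cases i <;> simp [vsub_eq_sub] <;> rfl
    rwa [heq] at hcomp
  -- linear machinery
  obtain ⟨e, he⟩ := exists_e w₁ w₂ hlin
  obtain ⟨m, hm, hmc⟩ := exists_m
  obtain ⟨eh, heh⟩ := exists_ehat w₁ w₂
  set bval : ℝ := ⟪n, A - E⟫ with hbval
  set D : ℝ := w₁ 0 * w₂ 1 - w₂ 0 * w₁ 1 with hDdef
  have hdet : ContinuousLinearMap.det eh = D := det_ehat w₁ w₂ eh heh
  -- |D| = L * bval
  have habsD : |D| = L * bval := by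
    have horth : n 0 * w₁ 0 + n 1 * w₁ 1 = 0 := by
      have := hn2; rw [inner2] at this; linarith
    have hunit : n 0 ^ 2 + n 1 ^ 2 = 1 := by
      have h := norm2_sq n; rw [hn1] at h; nlinarith [h]
    have hbv : bval = n 0 * w₂ 0 + n 1 * w₂ 1 := by
      rw [hbval, inner2]
    have hL2 : L ^ 2 = w₁ 0 ^ 2 + w₁ 1 ^ 2 := by
      rw [hLdef, norm2_sq]
    set d : ℝ := w₁ 0 * n 1 - w₁ 1 * n 0 with hd
    have hd2 : d ^ 2 = L ^ 2 := by
      rw [hd, hL2]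
      linear_combination (w₁ 0 ^ 2 + w₁ 1 ^ 2) * hunit - (w₁ 0 * n 0 + w₁ 1 * n 1 + 0) * horth
    have hDd : D = d * bval := by
      rw [hDdef, hd, hbv]
      linear_combination (-(w₁ 0 * w₂ 1 - w₂ 0 * w₁ 1)) * hunit
        + (n 0 * w₂ 1 - n 1 * w₂ 0) * horth
    have hDb : D^2 = (L*bval)^2 := by rw [hDd]; linear_combination bval^2 * hd2
    rw [← Real.sqrt_sq_eq_abs, hDb, Real.sqrt_sq (le_of_lt (mul_pos hL hn3))]
  have hD0 : D ≠ 0 := by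
    intro h
    rw [h, abs_zero] at habsD
    exact absurd habsD.symm (ne_of_gt (mul_pos hL hn3))
  have hAE : A ≠ E := by
    intro h
    exact (by decide : (2:Fin 3) ≠ 1)
      (hindep.injective (show ![N,E,A] 2 = ![N,E,A] 1 by simpa using h))
  -- the affine parametrization T
  set T : ℝ×ℝ → EuclideanSpace ℝ (Fin 2) := fun y => E + e y with hTdef
  have hTm : ∀ y : ℝ×ℝ, eh (m y) = e y := by
    intro y
    rw [heh, (hmc y).1, (hmc y).2, ← he]
  -- T '' simplex = triangle
  have hMT : convexHull ℝ ({N, E, A} : Set (EuclideanSpace ℝ (Fin 2))) = T '' stdSimplex2 := by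
    have haff : ∃ aff : (ℝ×ℝ) →ᵃ[ℝ] EuclideanSpace ℝ (Fin 2), ⇑aff = T := by
      refine ⟨{ toFun := T
                linear := e.toLinearMap
                map_vadd' := ?_ }, rfl⟩
      intro p v
      show E + e (v + p) = e v + (E + e p)
      rw [map_add]
      abel
    obtain ⟨aff, haff⟩ := haff
    rw [stdSimplex2_eq, ← haff, AffineMap.image_convexHull]
    congr 1
    rw [Set.image_insert_eq, Set.image_insert_eq, Set.image_singleton]
    have h00 : aff (0,0) = E := by
      rw [congrFun haff (0,0), hTdef]; beta_reduce; rw [he]; simp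
    have h10 : aff ((1:ℝ),(0:ℝ)) = N := by
      rw [congrFun haff ((1:ℝ),(0:ℝ)), hTdef]; beta_reduce; rw [he]; simp [hw₁]
    have h01 : aff ((0:ℝ),(1:ℝ)) = A := by
      rw [congrFun haff ((0:ℝ),(1:ℝ)), hTdef]; beta_reduce; rw [he]; simp [hw₂]
    rw [h00, h10, h01]
    exact Set.insert_comm N E {A} ▸ rfl
  -- change of variables
  have hS : MeasurableSet (⇑m '' stdSimplex2) :=
    m.measurableEmbedding.measurableSet_image' measurableSet_stdSimplex2
  have himg2 : T '' stdSimplex2 = (fun x => E + eh x) '' (⇑m '' stdSimplex2) := by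
    rw [Set.image_image]
    apply Set.image_congr
    intro y _
    rw [hTm y]
  have hinj : Set.InjOn (fun x => E + eh x) (⇑m '' stdSimplex2) := by
    intro x1 _ x2 _ hx
    have h1 : eh x1 = eh x2 := add_left_cancel hx
    rw [heh, heh] at h1
    have h2 : (x1 0 - x2 0) • w₁ + (x1 1 - x2 1) • w₂ = 0 := by
      rw [sub_smul, sub_smul, sub_add_sub_comm, h1, sub_self]
    obtain ⟨hs, ht⟩ := (LinearIndependent.pair_iff.mp hlin) _ _ h2
    exact euclid_ext (by linarith [hs]) (by linarith [ht])
  have hDT' : ∀ x ∈ ⇑m '' stdSimplex2,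
      HasFDerivWithinAt (fun x => E + eh x) eh (⇑m '' stdSimplex2) x :=
    fun x _ => ((eh.hasFDerivAt).const_add E).hasFDerivWithinAt
  have cov := MeasureTheory.integral_image_eq_integral_abs_det_fderiv_smul volume hS hDT' hinj φ
  have cov2 := hm.setIntegral_image_emb m.measurableEmbedding
      (fun x => |ContinuousLinearMap.det eh| • φ (E + eh x)) stdSimplex2
  have hstep : (∫ x in convexHull ℝ ({N, E, A} : Set (EuclideanSpace ℝ (Fin 2))), φ x)
      = |D| • ∫ y in stdSimplex2, φ (T y) := by
    rw [hMT, himg2, cov, cov2]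
    have heq : (fun y : ℝ×ℝ => |ContinuousLinearMap.det eh| • φ (E + eh (m y)))
        = fun y => |D| • φ (T y) := by
      funext y
      rw [hTm, hdet, hTdef]
    rw [heq, MeasureTheory.integral_smul]
  -- the field in simplex coordinates
  set Esym : EuclideanSpace ℝ (Fin 2) →L[ℝ] (ℝ×ℝ) :=
    LinearMap.toContinuousLinearMap (e.symm.toLinearMap) with hEsym
  set eCLM : (ℝ×ℝ) →L[ℝ] EuclideanSpace ℝ (Fin 2) :=
    LinearMap.toContinuousLinearMap (e.toLinearMap) with heCLM
  have hEsymapp : ∀ z, Esym z = e.symm z := fun z => rfl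
  have heCLMapp : ∀ y, eCLM y = e y := fun y => rfl
  set g : ℝ×ℝ → ℝ×ℝ := fun y => Esym (φ (T y)) with hgdef
  have hge : ∀ y, φ (T y) = (g y).1 • w₁ + (g y).2 • w₂ := by
    intro y
    calc φ (T y) = e (e.symm (φ (T y))) := (e.apply_symm_apply _).symm
    _ = e ((g y).1, (g y).2) := rfl
    _ = (g y).1 • w₁ + (g y).2 • w₂ := he _ _
  have hTCD : ContDiff ℝ 1 T := by
    have : T = fun y => E + eCLM y := rfl
    rw [this]
    exact contDiff_const.add eCLM.contDiff
  set V : Set (ℝ×ℝ) := T ⁻¹' U with hVdef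
  have hVopen : IsOpen V := hU.preimage hTCD.continuous
  have hΔV : stdSimplex2 ⊆ V := by
    intro y hy
    have : T y ∈ convexHull ℝ ({N, E, A} : Set (EuclideanSpace ℝ (Fin 2))) :=
      hMT ▸ Set.mem_image_of_mem T hy
    exact hMU this
  have hgCD : ContDiffOn ℝ 1 g V :=
    Esym.contDiff.comp_contDiffOn (hφ.comp hTCD.contDiffOn (fun y hy => hy))
  have hg1CD : ContDiffOn ℝ 1 (fun y => (g y).1) V := contDiff_fst.comp_contDiffOn hgCD
  have hg2CD : ContDiffOn ℝ 1 (fun y => (g y).2) V := contDiff_snd.comp_contDiffOn hgCD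
  -- divergence transfer
  have hdiv' : ∀ y ∈ stdSimplex2,
      fderiv ℝ (fun y => (g y).1) y (1,0) + fderiv ℝ (fun y => (g y).2) y (0,1) = c := by
    intro y hy
    have hxM : T y ∈ convexHull ℝ ({N, E, A} : Set (EuclideanSpace ℝ (Fin 2))) :=
      hMT ▸ Set.mem_image_of_mem T hy
    have hxU : T y ∈ U := hMU hxM
    have hDφ : HasFDerivAt φ (fderiv ℝ φ (T y)) (T y) :=
      ((hφ.differentiableOn one_ne_zero).differentiableAt (hU.mem_nhds hxU)).hasFDerivAt
    have hDT : HasFDerivAt T eCLM y := by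
      have h := (eCLM.hasFDerivAt (x := y)).const_add E
      exact h
    set Dg : (ℝ×ℝ) →L[ℝ] (ℝ×ℝ) := (Esym.comp (fderiv ℝ φ (T y))).comp eCLM with hDg
    have hgD : HasFDerivAt g Dg y := by
      rw [hDg, ContinuousLinearMap.comp_assoc]
      exact (Esym.hasFDerivAt).comp y (hDφ.comp y hDT)
    have h1 : HasFDerivAt (fun y => (g y).1) ((ContinuousLinearMap.fst ℝ ℝ ℝ).comp Dg) y :=
      (ContinuousLinearMap.fst ℝ ℝ ℝ).hasFDerivAt.comp y hgD
    have h2 : HasFDerivAt (fun y => (g y).2) ((ContinuousLinearMap.snd ℝ ℝ ℝ).comp Dg) y :=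
      (ContinuousLinearMap.snd ℝ ℝ ℝ).hasFDerivAt.comp y hgD
    rw [h1.fderiv, h2.fderiv]
    have hval : ((ContinuousLinearMap.fst ℝ ℝ ℝ).comp Dg) (1,0)
        + ((ContinuousLinearMap.snd ℝ ℝ ℝ).comp Dg) (0,1)
        = LinearMap.trace ℝ (ℝ×ℝ) (Dg : (ℝ×ℝ) →ₗ[ℝ] (ℝ×ℝ)) := by
      rw [trace2]
      rfl
    rw [hval]
    have hconj : (Dg : (ℝ×ℝ) →ₗ[ℝ] (ℝ×ℝ))
        = (e.symm).conj ((fderiv ℝ φ (T y)).toLinearMap) := by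
      apply LinearMap.ext
      intro z
      simp only [hDg, LinearEquiv.conj_apply, LinearMap.coe_comp, Function.comp_apply,
        ContinuousLinearMap.coe_comp', ContinuousLinearMap.coe_coe, LinearEquiv.coe_coe,
        LinearEquiv.symm_symm]
      rfl
    rw [hconj, LinearMap.trace_conj']
    exact hdiv _ hxM
  -- left edge : g₁ (0,t) = 0
  have hw₂0 : ‖w₂‖ ≠ 0 := norm_ne_zero_iff.2 (sub_ne_zero.2 hAE)
  have hleft' : ∀ t ∈ Set.Icc (0:ℝ) 1, (g (0,t)).1 = 0 := by
    intro t ht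
    have hxseg : T (0,t) ∈ segment ℝ E A := by
      rw [segment_eq_image']
      refine ⟨t, ht, ?_⟩
      rw [hTdef]; beta_reduce; rw [he, ← hw₂, zero_smul, zero_add]
    have hinner : ⟪φ (T (0,t)), rot2 w₂⟫ = 0 := by
      have hν1 : ‖(‖w₂‖⁻¹ • rot2 w₂ : EuclideanSpace ℝ (Fin 2))‖ = 1 := by
        rw [norm_smul, norm_rot2, norm_inv, norm_norm]
        exact inv_mul_cancel₀ hw₂0
      have hν2 : ⟪(‖w₂‖⁻¹ • rot2 w₂ : EuclideanSpace ℝ (Fin 2)), w₂⟫ = 0 := by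
        rw [real_inner_smul_left, inner2, rot2_apply0, rot2_apply1]
        ring
      have h0 := hEA _ hxseg _ hν1 hν2
      rw [real_inner_smul_right] at h0
      rcases mul_eq_zero.mp h0 with h | h
      · exact absurd h (inv_ne_zero hw₂0)
      · exact h
    have hc0 : (φ (T (0,t))) 0 = (g (0,t)).1 * w₁ 0 + (g (0,t)).2 * w₂ 0 := by
      rw [hge (0,t)]; rfl
    have hc1 : (φ (T (0,t))) 1 = (g (0,t)).1 * w₁ 1 + (g (0,t)).2 * w₂ 1 := by
      rw [hge (0,t)]; rfl
    rw [inner2, hc0, hc1, rot2_apply0, rot2_apply1] at hinner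
    have : (g (0,t)).1 * D = 0 := by rw [hDdef]; linear_combination -hinner
    exact (mul_eq_zero.mp this).resolve_right hD0
  -- hypotenuse : g₁ + g₂ = 0
  have hAN0 : ‖A - N‖ ≠ 0 := norm_ne_zero_iff.2 (sub_ne_zero.2 hANe)
  have hANw : A - N = w₂ - w₁ := by rw [hw₁, hw₂]; abel
  have hhyp' : ∀ t ∈ Set.Icc (0:ℝ) 1, (g (1-t,t)).1 + (g (1-t,t)).2 = 0 := by
    intro t ht
    have hxseg : T (1-t,t) ∈ segment ℝ N A := by
      rw [segment_eq_image']
      refine ⟨t, ht, ?_⟩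
      rw [hTdef]; beta_reduce; rw [he, hw₁, hw₂]
      module
    have hinner : ⟪φ (T (1-t,t)), rot2 (A - N)⟫ = 0 := by
      have hν1 : ‖(‖A - N‖⁻¹ • rot2 (A - N) : EuclideanSpace ℝ (Fin 2))‖ = 1 := by
        rw [norm_smul, norm_rot2, norm_inv, norm_norm]
        exact inv_mul_cancel₀ hAN0
      have hν2 : ⟪(‖A - N‖⁻¹ • rot2 (A - N) : EuclideanSpace ℝ (Fin 2)), A - N⟫ = 0 := by
        rw [real_inner_smul_left, inner2, rot2_apply0, rot2_apply1]
        ring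
      have h0 := hNA _ hxseg _ hν1 hν2
      rw [real_inner_smul_right] at h0
      rcases mul_eq_zero.mp h0 with h | h
      · exact absurd h (inv_ne_zero hAN0)
      · exact h
    have hc0 : (φ (T (1-t,t))) 0 = (g (1-t,t)).1 * w₁ 0 + (g (1-t,t)).2 * w₂ 0 := by
      rw [hge (1-t,t)]; rfl
    have hc1 : (φ (T (1-t,t))) 1 = (g (1-t,t)).1 * w₁ 1 + (g (1-t,t)).2 * w₂ 1 := by
      rw [hge (1-t,t)]; rfl
    have hr0 : (rot2 (A - N)) 0 = -(w₂ 1 - w₁ 1) := by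
      rw [rot2_apply0, hANw]; rfl
    have hr1 : (rot2 (A - N)) 1 = w₂ 0 - w₁ 0 := by
      rw [rot2_apply1, hANw]; rfl
    rw [inner2, hc0, hc1, hr0, hr1] at hinner
    have : ((g (1-t,t)).1 + (g (1-t,t)).2) * D = 0 := by
      rw [hDdef]; linear_combination -hinner
    exact (mul_eq_zero.mp this).resolve_right hD0
  -- flux in coordinates
  have hTflux : ∀ s : ℝ, E + s • τ = T (s / L, 0) := by
    intro s
    rw [hτ, hTdef]; beta_reduce; rw [he, zero_smul, add_zero, smul_smul, div_eq_mul_inv]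
  have hfluxval : ∀ y : ℝ×ℝ, ⟪φ (T y), n⟫ = bval * (g y).2 := by
    intro y
    rw [hge y, inner_add_left, real_inner_smul_left, real_inner_smul_left]
    have h1 : ⟪w₁, n⟫ = (0:ℝ) := by rw [real_inner_comm]; exact hn2
    have h2 : ⟪w₂, n⟫ = bval := by rw [real_inner_comm, hbval, hw₂]
    rw [h1, h2]
    ring
  have hαv : α = L * (bval * ∫ t in (0:ℝ)..1, (g (t,0)).2) := by
    rw [hα]
    have hcong : (fun s => ⟪φ (E + s • τ), n⟫)
        = fun s => (fun u : ℝ => bval * (g (u, 0)).2) (s / L) := by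
      funext s
      beta_reduce
      rw [hTflux s, hfluxval]
    rw [hcong, intervalIntegral.integral_comp_div (fun u : ℝ => bval * (g (u, 0)).2)
      (ne_of_gt hL), zero_div, div_self (ne_of_gt hL),
      intervalIntegral.integral_const_mul, smul_eq_mul]
  have hα₁v : α₁ = L * (L * (bval * ∫ t in (0:ℝ)..1, t * (g (t,0)).2)) := by
    rw [hα₁]
    have hcong : (fun s => s * ⟪φ (E + s • τ), n⟫)
        = fun s => (fun u : ℝ => (L * bval) * (u * (g (u, 0)).2)) (s / L) := by
      funext s
      beta_reduce
      rw [hTflux s, hfluxval]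
      field_simp
    rw [hcong, intervalIntegral.integral_comp_div (fun u : ℝ => (L * bval) * (u * (g (u, 0)).2))
      (ne_of_gt hL), zero_div, div_self (ne_of_gt hL),
      intervalIntegral.integral_const_mul, smul_eq_mul]
    ring
  -- simplex integrals
  obtain ⟨hI2, hI1⟩ := simplex_integrals (fun y => (g y).1) (fun y => (g y).2) V hVopen hΔV
    hg1CD hg2CD c hdiv' hleft' hhyp'
  beta_reduce at hI2 hI1
  -- integral of g, componentwise
  have hgInt : MeasureTheory.IntegrableOn g stdSimplex2 :=
    (hgCD.continuousOn.mono hΔV).integrableOn_compact isCompact_stdSimplex2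
  have hex : ∀ x : ℝ×ℝ, e x = x.1 • w₁ + x.2 • w₂ := fun x => he x.1 x.2
  have hfstI : (∫ y in stdSimplex2, (g y).1) = (∫ y in stdSimplex2, g y).1 :=
    (ContinuousLinearMap.fst ℝ ℝ ℝ).integral_comp_comm hgInt
  have hsndI : (∫ y in stdSimplex2, (g y).2) = (∫ y in stdSimplex2, g y).2 :=
    (ContinuousLinearMap.snd ℝ ℝ ℝ).integral_comp_comm hgInt
  have hφT : (∫ y in stdSimplex2, φ (T y))
      = (∫ y in stdSimplex2, (g y).1) • w₁ + (∫ y in stdSimplex2, (g y).2) • w₂ := by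
    have h1 : (fun y => φ (T y)) = fun y => eCLM (g y) := by
      funext y
      rw [heCLMapp]
      exact (e.apply_symm_apply (φ (T y))).symm
    rw [h1, ContinuousLinearMap.integral_comp_comm eCLM hgInt, heCLMapp, hex, hfstI, hsndI]
  rw [hstep, hφT, hI2, hI1, habsD, hτ, hG, hw₁, hw₂, hαv, hα₁v]
  match_scalars <;> field_simp <;> ring
end

section
/- Let S, N, E, A, D ∈ ℝ² with E ≠ N, let τ = (N − E)/‖N − E‖ and let n be a unit vector orthogonal to N − E. Let L = (S + E + N)/3, M = (N + E + A)/3, R = (E + S + D)/3 be the centroids of the triples (S,E,N), (N,E,A), (E,S,D), and let ρ_L, ρ_M, ρ_R be the corresponding radii of gyration. Then for all real numbers η, α, δ: −(δ + α − η)·(ρ_L² + ‖L − S‖²) + (ρ_R² + ‖R − S‖²)·δ + ‖E − S‖²·α + 2·⟨E − S, τ⟩·⟨M − E, τ⟩·α + (ρ_M² + ‖M − E‖²)·α + 2·⟨N − S, n⟩·⟨M − E, n⟩·α = (ρ_L² + ‖L − S‖²)·η + (1/6)·⟨A − S, (E − S) + (A − S) + (N − S)⟩·α + (1/6)·⟨D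 − N, (D − S) + (E − S) + (N − S)⟩·δ. (The vector identity proving Proposition 4: it rewrites expression (3.21) as the right-hand side of relation (3.17).) -/
open scoped RealInnerProductSpace

lemma parsevalE (τ n u v : EuclideanSpace ℝ (Fin 2))
    (hτ : ‖τ‖ = 1) (hn : ‖n‖ = 1) (ho : ⟪τ, n⟫ = 0) :
    ⟪u, τ⟫ * ⟪v, τ⟫ + ⟪u, n⟫ * ⟪v, n⟫ = ⟪u, v⟫ := by
  have h1 : τ 0 * τ 0 + τ 1 * τ 1 = 1 := by
    have := real_inner_self_eq_norm_sq τ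
    rw [hτ] at this
    simp only [PiLp.inner_apply, Fin.sum_univ_two, RCLike.inner_apply, conj_trivial] at this
    linear_combination this
  have h2 : n 0 * n 0 + n 1 * n 1 = 1 := by
    have := real_inner_self_eq_norm_sq n
    rw [hn] at this
    simp only [PiLp.inner_apply, Fin.sum_univ_two, RCLike.inner_apply, conj_trivial] at this
    linear_combination this
  have h3 : τ 0 * n 0 + τ 1 * n 1 = 0 := by
    simp only [PiLp.inner_apply, Fin.sum_univ_two, RCLike.inner_apply, conj_trivial] at ho
    linear_combination ho
  have he : (τ 0 * n 1 - τ 1 * n 0) ^ 2 = 1 := by nlinarith [h1, h2, h3]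
  have hc : n 0 = -(τ 1) * (τ 0 * n 1 - τ 1 * n 0) := by nlinarith [h1, h2, h3]
  have hd : n 1 = τ 0 * (τ 0 * n 1 - τ 1 * n 0) := by nlinarith [h1, h2, h3]
  have hA : τ 0 ^ 2 + n 0 ^ 2 = 1 := by
    linear_combination (n 0 - τ 1 * (τ 0 * n 1 - τ 1 * n 0)) * hc + τ 1 ^ 2 * he + h1
  have hB : τ 1 ^ 2 + n 1 ^ 2 = 1 := by
    linear_combination (n 1 + τ 0 * (τ 0 * n 1 - τ 1 * n 0)) * hd + τ 0 ^ 2 * he + h1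
  have hC : τ 0 * τ 1 + n 0 * n 1 = 0 := by
    linear_combination n 1 * hc + (-(τ 1) * (τ 0 * n 1 - τ 1 * n 0)) * hd
      + (-(τ 0 * τ 1)) * he
  simp only [PiLp.inner_apply, Fin.sum_univ_two, RCLike.inner_apply, conj_trivial]
  linear_combination u 0 * v 0 * hA + u 1 * v 1 * hB + (u 0 * v 1 + u 1 * v 0) * hC


/-- The vector identity proving Proposition 4: expression (3.21) rewritten as the
right-hand side of relation (3.17). -/
theorem stmt7 (S N E A D : EuclideanSpace ℝ (Fin 2)) (hEN : E ≠ N)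
    (τ n : EuclideanSpace ℝ (Fin 2))
    (hτ : τ = (‖N - E‖)⁻¹ • (N - E))
    (hn1 : ‖n‖ = 1) (hn2 : ⟪n, N - E⟫ = 0)
    (L M R : EuclideanSpace ℝ (Fin 2))
    (hL : L = (1 / 3 : ℝ) • (S + E + N))
    (hM : M = (1 / 3 : ℝ) • (N + E + A))
    (hR : R = (1 / 3 : ℝ) • (E + S + D))
    (ρL ρM ρR : ℝ)
    (hρL : ρL = Real.sqrt ((1 / 36) * (‖S - E‖ ^ 2 + ‖E - N‖ ^ 2 + ‖N - S‖ ^ 2)))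
    (hρM : ρM = Real.sqrt ((1 / 36) * (‖N - E‖ ^ 2 + ‖E - A‖ ^ 2 + ‖A - N‖ ^ 2)))
    (hρR : ρR = Real.sqrt ((1 / 36) * (‖E - S‖ ^ 2 + ‖S - D‖ ^ 2 + ‖D - E‖ ^ 2)))
    (η α δ : ℝ) :
    -(δ + α - η) * (ρL ^ 2 + ‖L - S‖ ^ 2) + (ρR ^ 2 + ‖R - S‖ ^ 2) * δ
        + ‖E - S‖ ^ 2 * α
        + 2 * ⟪E - S, τ⟫ * ⟪M - E, τ⟫ * α
        + (ρM ^ 2 + ‖M - E‖ ^ 2) * α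
        + 2 * ⟪N - S, n⟫ * ⟪M - E, n⟫ * α =
      (ρL ^ 2 + ‖L - S‖ ^ 2) * η
        + (1 / 6) * ⟪A - S, (E - S) + (A - S) + (N - S)⟫ * α
        + (1 / 6) * ⟪D - N, (D - S) + (E - S) + (N - S)⟫ * δ := by
  have hNE : N - E ≠ 0 := sub_ne_zero.mpr (Ne.symm hEN)
  have hτ1 : ‖τ‖ = 1 := by
    rw [hτ, norm_smul, norm_inv, norm_norm, inv_mul_cancel₀ (norm_ne_zero_iff.mpr hNE)]
  have hτn : ⟪τ, n⟫ = 0 := by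
    rw [hτ, real_inner_smul_left, real_inner_comm, hn2, mul_zero]
  have hNSn : ⟪N - S, n⟫ = ⟪E - S, n⟫ := by
    have h3 : ⟪N - E, n⟫ = 0 := by rw [real_inner_comm]; exact hn2
    have h4 : N - S = (E - S) + (N - E) := by abel
    rw [h4, inner_add_left, h3, add_zero]
  have hpar := parsevalE τ n (E - S) (M - E) hτ1 hn1 hτn
  have hp : 2 * ⟪E - S, τ⟫ * ⟪M - E, τ⟫ * α + 2 * ⟪N - S, n⟫ * ⟪M - E, n⟫ * α
      = 2 * ⟪E - S, M - E⟫ * α := by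
    rw [hNSn]; linear_combination 2 * α * hpar
  have hρL2 : ρL ^ 2 = (1 / 36) * (‖S - E‖ ^ 2 + ‖E - N‖ ^ 2 + ‖N - S‖ ^ 2) := by
    rw [hρL, Real.sq_sqrt (by positivity)]
  have hρM2 : ρM ^ 2 = (1 / 36) * (‖N - E‖ ^ 2 + ‖E - A‖ ^ 2 + ‖A - N‖ ^ 2) := by
    rw [hρM, Real.sq_sqrt (by positivity)]
  have hρR2 : ρR ^ 2 = (1 / 36) * (‖E - S‖ ^ 2 + ‖S - D‖ ^ 2 + ‖D - E‖ ^ 2) := by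
    rw [hρR, Real.sq_sqrt (by positivity)]
  rw [hρL2, hρM2, hρR2]
  subst hL hM hR
  simp only [← real_inner_self_eq_norm_sq] at hp ⊢
  simp only [PiLp.inner_apply, Fin.sum_univ_two, RCLike.inner_apply, conj_trivial,
    PiLp.sub_apply, PiLp.add_apply, PiLp.smul_apply, smul_eq_mul] at hp ⊢
  linear_combination hp
end

section
/- Let S, N, E, A, D ∈ ℝ² with S ≠ N. Let L = (S + E + N)/3, M = (N + E + A)/3, R = (E + S + D)/3 and let ρ_L = √((1/36)·(‖S−E‖² + ‖E−N‖² + ‖N−S‖²)). For real numbers η, α, δ define η₂ = (ρ_L² + ‖L − S‖²)·η + (1/6)·⟨A − S, (E − S) + (A − S) + (N − S)⟩·α + (1/6)·⟨D − N, (D − S) + (E − S) + (N − S)⟩·δ and η̃₂ = (ρ_L² + ‖L − N‖²)·η + (1/6)·⟨A − S, (S − N) + (E − N) + (A − N)⟩·α + (1/6)·⟨D − N, (S − N) + (D − N) + (E − N)⟩·δ. Then (η₂ − η̃₂ + ‖N − S‖²·η)/(2·‖N − S‖) = (1/‖N − S‖)·⟨(L − S)·η + (M − L)·α + (R − L)·δ,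 N − S⟩. (Proposition 5, first expression (3.22) for the first order momentum η₁.) -/
open scoped RealInnerProductSpace

/-- Proposition 5, first expression (3.22) for the first order momentum `η₁`. -/
theorem stmt8 (S N E A D : EuclideanSpace ℝ (Fin 2)) (hSN : S ≠ N)
    (L M R : EuclideanSpace ℝ (Fin 2))
    (hL : L = (1 / 3 : ℝ) • (S + E + N))
    (hM : M = (1 / 3 : ℝ) • (N + E + A))
    (hR : R = (1 / 3 : ℝ) • (E + S + D))
    (ρL : ℝ)
    (hρL : ρL = Real.sqrt ((1 / 36) * (‖S - E‖ ^ 2 + ‖E - N‖ ^ 2 + ‖N - S‖ ^ 2)))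
    (η α δ η₂ η₂' : ℝ)
    (hη₂ : η₂ = (ρL ^ 2 + ‖L - S‖ ^ 2) * η
      + (1 / 6) * ⟪A - S, (E - S) + (A - S) + (N - S)⟫ * α
      + (1 / 6) * ⟪D - N, (D - S) + (E - S) + (N - S)⟫ * δ)
    (hη₂' : η₂' = (ρL ^ 2 + ‖L - N‖ ^ 2) * η
      + (1 / 6) * ⟪A - S, (S - N) + (E - N) + (A - N)⟫ * α
      + (1 / 6) * ⟪D - N, (S - N) + (D - N) + (E - N)⟫ * δ) :
    (η₂ - η₂' + ‖N - S‖ ^ 2 * η) / (2 * ‖N - S‖) =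
      (1 / ‖N - S‖) * ⟪η • (L - S) + α • (M - L) + δ • (R - L), N - S⟫ := by
  have hn : ‖N - S‖ ≠ 0 := norm_ne_zero_iff.mpr (sub_ne_zero.mpr (Ne.symm hSN))
  have key : η₂ - η₂' + ‖N - S‖ ^ 2 * η
      = 2 * ⟪η • (L - S) + α • (M - L) + δ • (R - L), N - S⟫ := by
    subst hL hM hR hη₂ hη₂'
    simp only [← real_inner_self_eq_norm_sq]
    simp only [inner_add_left, inner_add_right, inner_sub_left, inner_sub_right,
      real_inner_smul_left, real_inner_smul_right]
    simp only [real_inner_comm S N, real_inner_comm S E, real_inner_comm N E,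
      real_inner_comm S A, real_inner_comm N A, real_inner_comm S D,
      real_inner_comm N D, real_inner_comm E A, real_inner_comm E D,
      real_inner_comm A D]
    ring
  rw [key]
  field_simp
end

section
/- Let S, N, E, W, A, B, C, D ∈ ℝ² with S ≠ N, and set the centroids K = (S + N + W)/3, L = (N + S + E)/3, M = (N + E + A)/3, P = (W + N + B)/3, Q = (S + W + C)/3, R = (E + S + D)/3, the midpoint O = (S + N)/2, and the radii of gyration ρ_K and ρ_L of (S,N,W) and (N,S,E). Let n_SN be the unit vector orthogonal to N − S with ⟨n_SN, E − S⟩ > 0. Let η, α, β, γ, δ be real numbers such that: (i) η·(L − K) + α·(M − L) + β·(P − K) + γ·(Q − K) + δ·(R − L) = ‖N − S‖·n_SN; and (ii) (ρ_L² + ‖L − S‖²)·η + (1/6)·⟨A − S, (E−S)+(A−S)+(N−S)⟩·α + (1/6)·⟨D − N, (D−S)+(E−S)+(N−S)⟩·δ = (ρ_K² + ‖K − S‖²)·η − (1/6)·⟨B − S, (N−S)+(B−S)+(W−S)⟩·β − (1/6)·⟨C − N, (N−S)+(W−S)+(C−S)⟩·γ. Then α·⟨M − L, A − W⟩ + β·⟨P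 − K, B − E⟩ + γ·⟨Q − K, C − E⟩ + δ·⟨R − L, D − W⟩ = −3·‖N − S‖·⟨n_SN, (L − O) + (K − O)⟩. (Theorem 2, necessary condition (3.6) for a dual Raviart–Thomas basis.) -/
open scoped RealInnerProductSpace

/-- Theorem 2, necessary condition (3.6) for a dual Raviart–Thomas basis. -/
theorem stmt14 (S N E W A B C D : EuclideanSpace ℝ (Fin 2)) (hSN : S ≠ N)
    (K L M P Q R O : EuclideanSpace ℝ (Fin 2))
    (hK : K = (1 / 3 : ℝ) • (S + N + W))
    (hL : L = (1 / 3 : ℝ) • (N + S + E))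
    (hM : M = (1 / 3 : ℝ) • (N + E + A))
    (hP : P = (1 / 3 : ℝ) • (W + N + B))
    (hQ : Q = (1 / 3 : ℝ) • (S + W + C))
    (hR : R = (1 / 3 : ℝ) • (E + S + D))
    (hO : O = (1 / 2 : ℝ) • (S + N))
    (ρK ρL : ℝ)
    (hρK : ρK = Real.sqrt ((1 / 36) * (‖S - N‖ ^ 2 + ‖N - W‖ ^ 2 + ‖W - S‖ ^ 2)))
    (hρL : ρL = Real.sqrt ((1 / 36) * (‖N - S‖ ^ 2 + ‖S - E‖ ^ 2 + ‖E - N‖ ^ 2)))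
    (nSN : EuclideanSpace ℝ (Fin 2))
    (hnSN : ‖nSN‖ = 1) (hnSN0 : ⟪nSN, N - S⟫ = 0) (hnSNE : 0 < ⟪nSN, E - S⟫)
    (η α β γ δ : ℝ)
    (hi : η • (L - K) + α • (M - L) + β • (P - K) + γ • (Q - K) + δ • (R - L) =
      ‖N - S‖ • nSN)
    (hii : (ρL ^ 2 + ‖L - S‖ ^ 2) * η
        + (1 / 6) * ⟪A - S, (E - S) + (A - S) + (N - S)⟫ * α
        + (1 / 6) * ⟪D - N, (D - S) + (E - S) + (N - S)⟫ * δ =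
      (ρK ^ 2 + ‖K - S‖ ^ 2) * η
        - (1 / 6) * ⟪B - S, (N - S) + (B - S) + (W - S)⟫ * β
        - (1 / 6) * ⟪C - N, (N - S) + (W - S) + (C - S)⟫ * γ) :
    α * ⟪M - L, A - W⟫ + β * ⟪P - K, B - E⟫ + γ * ⟪Q - K, C - E⟫ +
        δ * ⟪R - L, D - W⟫ =
      -3 * ‖N - S‖ * ⟪nSN, (L - O) + (K - O)⟫ := by
  subst hK hL hM hP hQ hR hO hρK hρL
  rw [Real.sq_sqrt (by positivity), Real.sq_sqrt (by positivity)] at hii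
  have h0 : (η • ((1 / 3 : ℝ) • (N + S + E) - (1 / 3 : ℝ) • (S + N + W)) + α • ((1 / 3 : ℝ) • (N + E + A) - (1 / 3 : ℝ) • (N + S + E)) + β • ((1 / 3 : ℝ) • (W + N + B) - (1 / 3 : ℝ) • (S + N + W)) + γ • ((1 / 3 : ℝ) • (S + W + C) - (1 / 3 : ℝ) • (S + N + W)) + δ • ((1 / 3 : ℝ) • (E + S + D) - (1 / 3 : ℝ) • (N + S + E))) 0 = (‖N - S‖ • nSN) 0 := by rw [hi]
  have h1 : (η • ((1 / 3 : ℝ) • (N + S + E) - (1 / 3 : ℝ) • (S + N + W)) + α • ((1 / 3 : ℝ) • (N + E + A) - (1 / 3 : ℝ) • (N + S + E)) + β • ((1 / 3 : ℝ) • (W + N + B) - (1 / 3 : ℝ) • (S + N + W)) + γ • ((1 / 3 : ℝ) • (S + W + C) - (1 / 3 : ℝ) • (S + N + W)) + δ • ((1 / 3 : ℝ) • (E + S + D) - (1 / 3 : ℝ) • (N + S + E))) 1 = (‖N - S‖ • nSN) 1 := by rw [hi]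
  simp only [← real_inner_self_eq_norm_sq] at hii
  simp only [PiLp.inner_apply, RCLike.inner_apply, conj_trivial, Fin.sum_univ_two,
    PiLp.add_apply, PiLp.sub_apply, PiLp.smul_apply, smul_eq_mul] at h0 h1 hii hnSN0 ⊢
  linear_combination (3 * S 0 - N 0 - E 0 - W 0) * h0 + (3 * S 1 - N 1 - E 1 - W 1) * h1
    + 2 * hii - 2 * ‖N - S‖ * hnSN0
end
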